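/- arXiv:1909.04255 — 7 statements merged into one kernel-verified Lean document; each statement's English description precedes it below -/
import Mathlib

section
/- Let M ≥ 1, let α, β ∈ (0,∞)^M, and let p ∈ (0,1)^M with Σ_{i=1}^M p_i = 1. Let (x_k)_{k≥1} be a sequence of vectors in ℕ^M such that for every i, [x_k]_i / k → p_i as k → ∞. Then lim_{k→∞} (Γ(k + Σ_i β_i)/Γ(k + Σ_i α_i)) · ∏_{i=1}^M (Γ([x_k]_i + α_i)/Γ([x_k]_i + β_i)) = ∏_{i=1}^M p_i^{α_i − β_i}. -/
open Filter

/-- Auxiliary ratio `Γ(x+a)/(Γ(x)·x^a)`, which tends to `1` as `x → ∞`. -/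
noncomputable def eRatio (a x : ℝ) : ℝ := Real.Gamma (x + a) / (Real.Gamma x * x ^ a)

lemma aux_div_tendsto (c : ℝ) : Tendsto (fun x : ℝ => (x + c) / x) atTop (nhds 1) := by
  have h : Tendsto (fun x : ℝ => 1 + c / x) atTop (nhds (1 + 0)) :=
    tendsto_const_nhds.add (tendsto_const_nhds.div_atTop tendsto_id)
  rw [add_zero] at h
  refine h.congr' ?_
  filter_upwards [eventually_ne_atTop (0 : ℝ)] with x hx
  field_simp

lemma wendel {s : ℝ} (hs : 0 < s) (hs1 : s < 1) :
    Tendsto (eRatio s) atTop (nhds 1) := by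
  have hlow : Tendsto (fun x : ℝ => (x / (x + s)) ^ (1 - s)) atTop (nhds 1) := by
    have h1 : Tendsto (fun x : ℝ => x / (x + s)) atTop (nhds 1) := by
      have h := (aux_div_tendsto s).inv₀ one_ne_zero
      rw [inv_one] at h
      refine h.congr' ?_
      filter_upwards [eventually_gt_atTop (0 : ℝ)] with x hx
      rw [inv_div]
    have h2 := h1.rpow_const (p := 1 - s) (Or.inl one_ne_zero)
    simpa using h2
  refine tendsto_of_tendsto_of_tendsto_of_le_of_le' hlow tendsto_const_nhds ?_ ?_
  · -- lower bound
    filter_upwards [eventually_gt_atTop (0 : ℝ)] with x hx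
    have hxs : 0 < x + s := by linarith
    have hΓ : 0 < Real.Gamma x := Real.Gamma_pos_of_pos hx
    have hΓs : 0 < Real.Gamma (x + s) := Real.Gamma_pos_of_pos hxs
    have key := Real.Gamma_mul_add_mul_le_rpow_Gamma_mul_rpow_Gamma hxs
      (show (0:ℝ) < x + s + 1 by linarith) hs (show (0:ℝ) < 1 - s by linarith)
      (by ring)
    have harg : s * (x + s) + (1 - s) * (x + s + 1) = x + 1 := by ring
    rw [harg] at key
    have hG1 : Real.Gamma (x + 1) = x * Real.Gamma x := Real.Gamma_add_one hx.ne'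
    have hG2 : Real.Gamma (x + s + 1) = (x + s) * Real.Gamma (x + s) :=
      Real.Gamma_add_one hxs.ne'
    rw [hG1, hG2, Real.mul_rpow hxs.le hΓs.le] at key
    -- key : x * Γ x ≤ Γ(x+s)^s * ((x+s)^(1-s) * Γ(x+s)^(1-s))
    have key2 : x * Real.Gamma x ≤ Real.Gamma (x + s) * (x + s) ^ (1 - s) := by
      have : Real.Gamma (x+s) ^ s * ((x+s) ^ (1-s) * Real.Gamma (x+s) ^ (1-s))
          = (Real.Gamma (x+s) ^ s * Real.Gamma (x+s) ^ (1-s)) * (x+s) ^ (1-s) := by ring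
      rw [this, ← Real.rpow_add hΓs] at key
      have hss : s + (1 - s) = 1 := by ring
      rw [hss, Real.rpow_one] at key
      exact key
    -- goal : (x/(x+s))^(1-s) ≤ eRatio s x
    rw [eRatio, Real.div_rpow hx.le hxs.le,
      div_le_div_iff₀ (Real.rpow_pos_of_pos hxs _) (by positivity)]
    have hxx : x ^ (1 - s) * (Real.Gamma x * x ^ s) = (x ^ (1-s) * x ^ s) * Real.Gamma x := by
      ring
    rw [hxx, ← Real.rpow_add hx]
    have hss : 1 - s + s = 1 := by ring
    rw [hss, Real.rpow_one]
    calc x * Real.Gamma x ≤ Real.Gamma (x + s) * (x + s) ^ (1 - s) := key2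
      _ = _ := by ring
  · -- upper bound
    filter_upwards [eventually_gt_atTop (0 : ℝ)] with x hx
    have hΓ : 0 < Real.Gamma x := Real.Gamma_pos_of_pos hx
    have key := Real.Gamma_mul_add_mul_le_rpow_Gamma_mul_rpow_Gamma hx
      (show (0:ℝ) < x + 1 by linarith) (show (0:ℝ) < 1 - s by linarith) hs (by ring)
    have harg : (1 - s) * x + s * (x + 1) = x + s := by ring
    rw [harg, Real.Gamma_add_one hx.ne', Real.mul_rpow hx.le hΓ.le] at key
    -- key : Γ(x+s) ≤ Γ x ^ (1-s) * (x^s * Γ x ^ s)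
    have key2 : Real.Gamma (x + s) ≤ Real.Gamma x * x ^ s := by
      have h2 : Real.Gamma x ^ (1-s) * (x ^ s * Real.Gamma x ^ s)
          = (Real.Gamma x ^ (1-s) * Real.Gamma x ^ s) * x ^ s := by ring
      rw [h2, ← Real.rpow_add hΓ] at key
      have hss : 1 - s + s = 1 := by ring
      rw [hss, Real.rpow_one] at key
      exact key
    rw [eRatio, div_le_one (by positivity)]
    exact key2

lemma eRatio_rec {a : ℝ} (ha : 1 ≤ a) :
    ∀ᶠ x in atTop, eRatio a x = eRatio (a - 1) x * ((x + (a - 1)) / x) := by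
  filter_upwards [eventually_gt_atTop (0 : ℝ)] with x hx
  have hΓ : Real.Gamma x ≠ 0 := (Real.Gamma_pos_of_pos hx).ne'
  have hxa : (0:ℝ) < x + (a - 1) := by linarith
  have h1 : Real.Gamma (x + a) = (x + (a - 1)) * Real.Gamma (x + (a - 1)) := by
    rw [show x + a = (x + (a - 1)) + 1 by ring, Real.Gamma_add_one hxa.ne']
  have h2 : x ^ a = x ^ (a - 1) * x := by
    nth_rewrite 1 [show a = a - 1 + 1 by ring]
    rw [Real.rpow_add hx, Real.rpow_one]
  have hpow : x ^ (a - 1) ≠ 0 := (Real.rpow_pos_of_pos hx _).ne'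
  rw [eRatio, eRatio, h1, h2]
  field_simp

lemma eRatio_tendsto_aux : ∀ n : ℕ, ∀ a : ℝ, 0 ≤ a → a ≤ n →
    Tendsto (eRatio a) atTop (nhds 1) := by
  intro n
  induction n with
  | zero =>
    intro a ha ha'
    have h0 : a = 0 := le_antisymm (by exact_mod_cast ha') ha
    subst h0
    refine tendsto_const_nhds.congr' ?_
    filter_upwards [eventually_gt_atTop (0 : ℝ)] with x hx
    rw [eRatio]
    rw [Real.rpow_zero, mul_one, add_zero, div_self (Real.Gamma_pos_of_pos hx).ne']
  | succ n ih =>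
    intro a ha han
    rcases le_or_gt a n with h | h
    · exact ih a ha h
    rcases lt_or_ge a 1 with h1 | h1
    · have hn0 : 0 < a := by
        have : (n : ℝ) < 1 := lt_trans h h1
        have : n = 0 := by exact_mod_cast Nat.lt_one_iff.mp (by exact_mod_cast this)
        subst this
        simpa using h
      exact wendel hn0 h1
    · have hrec := eRatio_rec h1
      have ht := (ih (a - 1) (by linarith)
        (by push_cast at han ⊢; linarith)).mul (aux_div_tendsto (a - 1))
      rw [mul_one] at ht
      exact ht.congr' (EventuallyEq.symm hrec)

lemma eRatio_tendsto {a : ℝ} (ha : 0 ≤ a) : Tendsto (eRatio a) atTop (nhds 1) :=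
  eRatio_tendsto_aux ⌈a⌉₊ a ha (Nat.le_ceil a)

lemma ratio_eq {a b y : ℝ} (hb : 0 < b) (hy : 0 < y) :
    Real.Gamma (y + a) / Real.Gamma (y + b) = (eRatio a y / eRatio b y) * y ^ (a - b) := by
  have hΓ : Real.Gamma y ≠ 0 := (Real.Gamma_pos_of_pos hy).ne'
  have hΓb : Real.Gamma (y + b) ≠ 0 := (Real.Gamma_pos_of_pos (by linarith)).ne'
  have hya : y ^ a ≠ 0 := (Real.rpow_pos_of_pos hy a).ne'
  have hyb : y ^ b ≠ 0 := (Real.rpow_pos_of_pos hy b).ne'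
  rw [eRatio, eRatio, Real.rpow_sub hy]
  field_simp

/-- Deterministic limit for the ratio of Gamma-function products appearing in the
ratio of two Dirichlet-Multinomial pmfs: if `x k i / k → p i` for every `i`, then
`(Γ(k + Σ β)/Γ(k + Σ α)) · ∏ i, Γ(x k i + α i)/Γ(x k i + β i) → ∏ i, p i ^ (α i - β i)`. -/
theorem gamma_product_ratio_tendsto (M : ℕ) (hM : 1 ≤ M) (α β : Fin M → ℝ)
    (hα : ∀ i, 0 < α i) (hβ : ∀ i, 0 < β i)
    (p : Fin M → ℝ) (hp : ∀ i, 0 < p i ∧ p i < 1) (hpsum : ∑ i, p i = 1)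
    (x : ℕ → Fin M → ℕ)
    (hx : ∀ i, Tendsto (fun k : ℕ => (x k i : ℝ) / (k : ℝ)) atTop (nhds (p i))) :
    Tendsto (fun k : ℕ =>
        (Real.Gamma ((k : ℝ) + ∑ i, β i) / Real.Gamma ((k : ℝ) + ∑ i, α i)) *
          ∏ i, Real.Gamma ((x k i : ℝ) + α i) / Real.Gamma ((x k i : ℝ) + β i))
      atTop (nhds (∏ i, p i ^ (α i - β i))) := by
  have hne : Nonempty (Fin M) := Fin.pos_iff_nonempty.mp hM
  set A := ∑ i, α i with hA
  set B := ∑ i, β i with hB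
  have hApos : 0 < A := Finset.sum_pos (fun i _ => hα i) Finset.univ_nonempty
  have hBpos : 0 < B := Finset.sum_pos (fun i _ => hβ i) Finset.univ_nonempty
  have hXk : Tendsto (fun k : ℕ => ((k : ℝ))) atTop atTop := tendsto_natCast_atTop_atTop
  have hX : ∀ i, Tendsto (fun k : ℕ => ((x k i : ℝ))) atTop atTop := by
    intro i
    have hpi := (hp i).1
    refine tendsto_atTop_mono' atTop ?_ (hXk.const_mul_atTop (by linarith : 0 < p i / 2))
    filter_upwards [(hx i).eventually (eventually_gt_nhds
      (show p i / 2 < p i by linarith)), eventually_ge_atTop 1] with k h1 h2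
    have hk : (0:ℝ) < (k : ℝ) := by exact_mod_cast h2
    exact ((lt_div_iff₀ hk).mp h1).le
  have hG : Tendsto (fun k : ℕ =>
      ((eRatio B (k : ℝ) / eRatio A (k : ℝ)) *
        ∏ i, eRatio (α i) ((x k i : ℝ)) / eRatio (β i) ((x k i : ℝ))) *
        ∏ i, ((x k i : ℝ) / (k : ℝ)) ^ (α i - β i)) atTop
      (nhds (∏ i, p i ^ (α i - β i))) := by
    have h1 : Tendsto (fun k : ℕ => eRatio B (k : ℝ) / eRatio A (k : ℝ)) atTop (nhds 1) := by
      have h := ((eRatio_tendsto hBpos.le).comp hXk).div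
        ((eRatio_tendsto hApos.le).comp hXk) one_ne_zero
      rw [div_one] at h; exact h
    have h2 : Tendsto (fun k : ℕ =>
        ∏ i, eRatio (α i) ((x k i : ℝ)) / eRatio (β i) ((x k i : ℝ))) atTop
        (nhds (∏ _i : Fin M, (1:ℝ))) := by
      apply tendsto_finset_prod
      intro i _
      have h := ((eRatio_tendsto (hα i).le).comp (hX i)).div
        ((eRatio_tendsto (hβ i).le).comp (hX i)) one_ne_zero
      rw [div_one] at h; exact h
    have h3 : Tendsto (fun k : ℕ => ∏ i, ((x k i : ℝ) / (k : ℝ)) ^ (α i - β i)) atTop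
        (nhds (∏ i, p i ^ (α i - β i))) := by
      apply tendsto_finset_prod
      intro i _
      exact (hx i).rpow_const (Or.inl (hp i).1.ne')
    have h := (h1.mul h2).mul h3
    simpa using h
  refine hG.congr' ?_
  have hxall : ∀ᶠ k : ℕ in atTop, ∀ i, (1:ℝ) ≤ (x k i : ℝ) :=
    eventually_all.mpr fun i => (hX i).eventually_ge_atTop 1
  filter_upwards [hxall, eventually_ge_atTop 1] with k hxk hk
  have hkpos : (0:ℝ) < (k : ℝ) := by exact_mod_cast hk
  have hxpos : ∀ i, (0:ℝ) < (x k i : ℝ) := fun i => lt_of_lt_of_le one_pos (hxk i)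
  have e1 : Real.Gamma ((k : ℝ) + B) / Real.Gamma ((k : ℝ) + A)
      = (eRatio B (k : ℝ) / eRatio A (k : ℝ)) * (k : ℝ) ^ (B - A) :=
    ratio_eq hApos hkpos
  have e2 : (∏ i, Real.Gamma ((x k i : ℝ) + α i) / Real.Gamma ((x k i : ℝ) + β i))
      = (∏ i, eRatio (α i) ((x k i : ℝ)) / eRatio (β i) ((x k i : ℝ))) *
        ∏ i, ((x k i : ℝ)) ^ (α i - β i) := by
    rw [← Finset.prod_mul_distrib]
    exact Finset.prod_congr rfl fun i _ => ratio_eq (hβ i) (hxpos i)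
  have e3 : (∏ i, ((x k i : ℝ) / (k : ℝ)) ^ (α i - β i))
      = (∏ i, ((x k i : ℝ)) ^ (α i - β i)) * (k : ℝ) ^ (B - A) := by
    have : ∀ i ∈ Finset.univ, ((x k i : ℝ) / (k : ℝ)) ^ (α i - β i)
        = ((x k i : ℝ)) ^ (α i - β i) / (k : ℝ) ^ (α i - β i) :=
      fun i _ => Real.div_rpow (hxpos i).le hkpos.le _
    rw [Finset.prod_congr rfl this, Finset.prod_div_distrib,
      ← Real.rpow_sum_of_pos hkpos, div_eq_mul_inv, ← Real.rpow_neg hkpos.le]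
    congr 2
    rw [Finset.sum_sub_distrib]
    ring
  rw [e3, e1, e2]
  ring
end

section
/- Let M ≥ 1 and let p ∈ (0,1)^M with Σ_{i=1}^M p_i = 1. Let S_1, S_2, ... be an i.i.d. sequence of random variables with values in {1,...,M} and P(S_k = i) = p_i, and let X_k ∈ ℕ^M be the count vector [X_k]_i = #{t ≤ k : S_t = i}. For fixed α, β ∈ (0,∞)^M define Y_k = Dirichlet-Multinomial(X_k; α, k) / Dirichlet-Multinomial(X_k; β, k). Then, almost surely, lim_{k→∞} Y_k = (Γ(Σ_i α_i) ∏_i Γ(β_i)) / (Γ(Σ_i β_i) ∏_i Γ(α_i)) · ∏_{i=1}^M p_i^{α_i − β_i}. -/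
open Filter MeasureTheory ProbabilityTheory
open Topology

/-- The Dirichlet-Multinomial probability mass function with parameters `α ∈ (0,∞)^M`
and `n ∈ ℕ`, evaluated at `x ∈ ℕ^M`. -/
noncomputable def dirichletMultinomial {M : ℕ} (x : Fin M → ℕ) (α : Fin M → ℝ) (n : ℕ) : ℝ :=
  ((n.factorial : ℝ) * Real.Gamma (∑ i, α i) / Real.Gamma ((n : ℝ) + ∑ i, α i)) *
    ∏ i, Real.Gamma ((x i : ℝ) + α i) / (((x i).factorial : ℝ) * Real.Gamma (α i))

lemma gamma_nat_add {a : ℝ} (ha : 0 < a) (n : ℕ) :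
    Real.Gamma ((n : ℝ) + a) = (∏ j ∈ Finset.range n, (a + j)) * Real.Gamma a := by
  induction n with
  | zero => simp
  | succ n ih =>
    have h : ((n + 1 : ℕ) : ℝ) + a = ((n : ℝ) + a) + 1 := by push_cast; ring
    have hpos : (0 : ℝ) < (n : ℝ) + a := by positivity
    rw [h, Real.Gamma_add_one hpos.ne', ih, Finset.prod_range_succ]
    push_cast
    ring

lemma gamma_ratio_tendsto {a b : ℝ} (ha : 0 < a) (hb : 0 < b) :
    Tendsto (fun n : ℕ => Real.Gamma ((n : ℝ) + a) / Real.Gamma ((n : ℝ) + b) * (n : ℝ) ^ (b - a))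
      atTop (𝓝 1) := by
  have hGa := Real.Gamma_pos_of_pos ha
  have hGb := Real.Gamma_pos_of_pos hb
  set g : ℕ → ℝ := fun n =>
    (Real.Gamma a / Real.Gamma b) * (Real.GammaSeq b n / Real.GammaSeq a n) *
      ((b + n) / (a + n)) with hg
  have hkey : ∀ n : ℕ, 1 ≤ n →
      Real.Gamma ((n : ℝ) + a) / Real.Gamma ((n : ℝ) + b) * (n : ℝ) ^ (b - a) = g n := by
    intro n hn
    have hn0 : (0 : ℝ) < n := by exact_mod_cast hn
    have hpa : (0:ℝ) < ∏ j ∈ Finset.range n, (a + j) :=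
      Finset.prod_pos fun j _ => by positivity
    have hpb : (0:ℝ) < ∏ j ∈ Finset.range n, (b + j) :=
      Finset.prod_pos fun j _ => by positivity
    have hna : (0:ℝ) < a + n := by positivity
    have hnb : (0:ℝ) < b + n := by positivity
    have hfac : (0:ℝ) < (n.factorial : ℝ) := by exact_mod_cast n.factorial_pos
    have hra : (0:ℝ) < (n:ℝ) ^ a := Real.rpow_pos_of_pos hn0 a
    have hrb : (0:ℝ) < (n:ℝ) ^ b := Real.rpow_pos_of_pos hn0 b
    simp only [hg, Real.GammaSeq]
    rw [gamma_nat_add ha, gamma_nat_add hb,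
      Finset.prod_range_succ, Finset.prod_range_succ, Real.rpow_sub hn0]
    field_simp
  have hGaseq := Real.GammaSeq_tendsto_Gamma a
  have hGbseq := Real.GammaSeq_tendsto_Gamma b
  have hfrac : Tendsto (fun n : ℕ => (b + n) / (a + n)) atTop (𝓝 1) := by
    have h1 : Tendsto (fun n : ℕ => (a + n : ℝ)) atTop atTop :=
      tendsto_atTop_add_const_left _ _ tendsto_natCast_atTop_atTop
    have h2 : Tendsto (fun n : ℕ => (b - a) / (a + n)) atTop (𝓝 0) :=
      Tendsto.div_atTop tendsto_const_nhds h1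
    have h3 : Tendsto (fun n : ℕ => 1 + (b - a) / (a + n)) atTop (𝓝 (1 + 0)) :=
      tendsto_const_nhds.add h2
    rw [add_zero] at h3
    refine h3.congr fun n => ?_
    have : (0:ℝ) < a + n := by positivity
    field_simp
    ring
  have hgl : Tendsto g atTop
      (𝓝 ((Real.Gamma a / Real.Gamma b) * (Real.Gamma b / Real.Gamma a) * 1)) :=
    (tendsto_const_nhds.mul (hGbseq.div hGaseq hGa.ne')).mul hfrac
  have : (Real.Gamma a / Real.Gamma b) * (Real.Gamma b / Real.Gamma a) * 1 = 1 := by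
    field_simp
  rw [this] at hgl
  exact hgl.congr' (by filter_upwards [eventually_ge_atTop 1] with n hn using (hkey n hn).symm)

lemma slln_count {M : ℕ} (p : Fin M → ℝ) (hp : ∀ i, 0 < p i)
    {Ω : Type*} [MeasurableSpace Ω] (P : Measure Ω) [IsProbabilityMeasure P]
    (S : ℕ → Ω → Fin M) (hSmeas : ∀ k, Measurable (S k))
    (hSindep : iIndepFun S P)
    (hSdist : ∀ k i, P {ω | S k ω = i} = ENNReal.ofReal (p i)) (i : Fin M) :
    ∀ᵐ ω ∂P, Tendsto
      (fun k => ((((Finset.Icc 1 k).filter (fun t => S t ω = i)).card : ℝ)) / k)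
      atTop (𝓝 (p i)) := by
  classical
  set f : Fin M → ℝ := fun j => if j = i then 1 else 0 with hf
  have hfm : Measurable f := measurable_of_countable f
  set Z : ℕ → Ω → ℝ := fun t ω => f (S (t + 1) ω) with hZ
  have hA : ∀ t : ℕ, MeasurableSet (S t ⁻¹' {i}) :=
    fun t => (hSmeas t) (measurableSet_singleton i)
  have hZind : ∀ t : ℕ, Z t = (S (t + 1) ⁻¹' {i}).indicator (1 : Ω → ℝ) := by
    intro t
    funext ω
    simp [hZ, hf, Set.indicator_apply, Set.mem_preimage]
  have hint : Integrable (Z 0) P := by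
    rw [hZind 0]
    exact (integrable_const (1:ℝ)).indicator (hA 1)
  have hindep : Pairwise (Function.onFun (IndepFun · · P) Z) := by
    intro s t hst
    exact (hSindep.indepFun (by omega : s + 1 ≠ t + 1)).comp hfm hfm
  have hident : ∀ t, IdentDistrib (Z t) (Z 0) P P := by
    intro t
    have hSid : IdentDistrib (S (t + 1)) (S 1) P P := by
      refine ⟨(hSmeas _).aemeasurable, (hSmeas _).aemeasurable, ?_⟩
      refine MeasureTheory.Measure.ext_iff_singleton.mpr fun j => ?_
      rw [Measure.map_apply (hSmeas _) (measurableSet_singleton j),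
        Measure.map_apply (hSmeas _) (measurableSet_singleton j)]
      have h1 : ∀ s : ℕ, S s ⁻¹' {j} = {ω | S s ω = j} := fun s => rfl
      rw [h1, h1, hSdist, hSdist]
    exact hSid.comp hfm
  have hlaw := strong_law_ae_real Z hint hindep hident
  have hmean : P[Z 0] = p i := by
    rw [hZind 0, integral_indicator_one (hA 1)]
    have : S 1 ⁻¹' {i} = {ω | S 1 ω = i} := rfl
    rw [this, measureReal_def, hSdist]
    exact ENNReal.toReal_ofReal (hp i).le
  rw [hmean] at hlaw
  filter_upwards [hlaw] with ω hω
  refine hω.congr fun n => ?_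
  congr 1
  have : ∀ t, Z t ω = if S (t + 1) ω = i then (1:ℝ) else 0 := fun t => rfl
  calc ∑ t ∈ Finset.range n, Z t ω
      = ∑ t ∈ Finset.range ((n+1) - 1), (if S (1 + t) ω = i then (1:ℝ) else 0) := by
        simp [this, add_comm]
    _ = ∑ t ∈ Finset.Ico 1 (n+1), (if S t ω = i then (1:ℝ) else 0) :=
        (Finset.sum_Ico_eq_sum_range (fun t => if S t ω = i then (1:ℝ) else 0) 1 (n+1)).symm
    _ = ∑ t ∈ Finset.Icc 1 n, (if S t ω = i then (1:ℝ) else 0) := by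
        rw [Finset.Ico_add_one_right_eq_Icc]
    _ = (((Finset.Icc 1 n).filter (fun t => S t ω = i)).card : ℝ) := by
        rw [Finset.sum_boole]

/-- For i.i.d. signals with distribution `p` and empirical count vectors `X k`, the ratio
`Y k = DirMult(X k; α, k) / DirMult(X k; β, k)` converges almost surely to
`(Γ(Σα) ∏ Γ(βᵢ))/(Γ(Σβ) ∏ Γ(αᵢ)) · ∏ pᵢ^(αᵢ - βᵢ)`. -/
theorem dirichletMultinomial_ratio_tendsto_ae
    (M : ℕ) (hM : 1 ≤ M) (p : Fin M → ℝ) (hp : ∀ i, 0 < p i ∧ p i < 1) (hpsum : ∑ i, p i = 1)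
    {Ω : Type*} [MeasurableSpace Ω] (P : Measure Ω) [IsProbabilityMeasure P]
    (S : ℕ → Ω → Fin M) (hSmeas : ∀ k, Measurable (S k))
    (hSindep : iIndepFun S P)
    (hSdist : ∀ k i, P {ω | S k ω = i} = ENNReal.ofReal (p i))
    (X : ℕ → Ω → Fin M → ℕ)
    (hX : ∀ k ω i, X k ω i = ((Finset.Icc 1 k).filter (fun t => S t ω = i)).card)
    (α β : Fin M → ℝ) (hα : ∀ i, 0 < α i) (hβ : ∀ i, 0 < β i)
    (Y : ℕ → Ω → ℝ)
    (hY : ∀ k ω, Y k ω = dirichletMultinomial (X k ω) α k / dirichletMultinomial (X k ω) β k) :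
    ∀ᵐ ω ∂P, Tendsto (fun k => Y k ω) atTop
      (nhds ((Real.Gamma (∑ i, α i) * ∏ i, Real.Gamma (β i)) /
          (Real.Gamma (∑ i, β i) * ∏ i, Real.Gamma (α i)) *
        ∏ i, p i ^ (α i - β i))) := by
  classical
  have : Nonempty (Fin M) := ⟨⟨0, hM⟩⟩
  set a : ℝ := ∑ i, α i with ha_def
  set b : ℝ := ∑ i, β i with hb_def
  have ha : 0 < a := Finset.sum_pos (fun i _ => hα i) Finset.univ_nonempty
  have hb : 0 < b := Finset.sum_pos (fun i _ => hβ i) Finset.univ_nonempty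
  set C : ℝ := (Real.Gamma a * ∏ i, Real.Gamma (β i)) /
      (Real.Gamma b * ∏ i, Real.Gamma (α i)) with hC_def
  have hae : ∀ᵐ ω ∂P, ∀ i, Tendsto (fun k => ((X k ω i : ℝ)) / k) atTop (𝓝 (p i)) := by
    rw [ae_all_iff]
    intro i
    filter_upwards [slln_count p (fun i => (hp i).1) P S hSmeas hSindep hSdist i] with ω hω
    refine hω.congr fun k => ?_
    rw [hX]
  filter_upwards [hae] with ω hω
  -- counts tend to infinity
  have hxi : ∀ i, Tendsto (fun k => X k ω i) atTop atTop := by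
    intro i
    rw [← tendsto_natCast_atTop_iff (R := ℝ)]
    have h1 : Tendsto (fun k : ℕ => ((X k ω i : ℝ) / k) * k) atTop atTop :=
      Tendsto.pos_mul_atTop (hp i).1 (hω i) tendsto_natCast_atTop_atTop
    refine h1.congr' ?_
    filter_upwards [eventually_ge_atTop 1] with k hk
    have : (k : ℝ) ≠ 0 := by positivity
    field_simp
  set F : ℕ → ℝ := fun k => Real.Gamma ((k : ℝ) + b) / Real.Gamma ((k : ℝ) + a) *
      (k : ℝ) ^ (a - b) with hF_def
  set G : Fin M → ℕ → ℝ := fun i k =>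
      Real.Gamma ((X k ω i : ℝ) + α i) / Real.Gamma ((X k ω i : ℝ) + β i) *
        (X k ω i : ℝ) ^ (β i - α i) with hG_def
  set D : Fin M → ℕ → ℝ := fun i k => ((X k ω i : ℝ) / k) ^ (α i - β i) with hD_def
  have hF : Tendsto F atTop (𝓝 1) := gamma_ratio_tendsto hb ha
  have hG : ∀ i, Tendsto (G i) atTop (𝓝 1) :=
    fun i => (gamma_ratio_tendsto (hα i) (hβ i)).comp (hxi i)
  have hD : ∀ i, Tendsto (D i) atTop (𝓝 (p i ^ (α i - β i))) :=
    fun i => (hω i).rpow_const (Or.inl (hp i).1.ne')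
  have htot : Tendsto (fun k => C * F k * ∏ i, (G i k * D i k)) atTop
      (𝓝 (C * 1 * ∏ i, (1 * p i ^ (α i - β i)))) :=
    (tendsto_const_nhds.mul hF).mul (tendsto_finset_prod _ fun i _ => (hG i).mul (hD i))
  have hconst : C * 1 * ∏ i, (1 * p i ^ (α i - β i)) = C * ∏ i, p i ^ (α i - β i) := by
    simp
  rw [hconst] at htot
  refine htot.congr' ?_
  have hev : ∀ᶠ k in atTop, 1 ≤ k ∧ ∀ i, 1 ≤ X k ω i := by
    refine (eventually_ge_atTop 1).and (eventually_all.mpr fun i => ?_)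
    exact (hxi i).eventually_ge_atTop 1
  filter_upwards [hev] with k hk
  obtain ⟨hk1, hxk⟩ := hk
  have hk0 : (0 : ℝ) < k := by exact_mod_cast hk1
  have hx0 : ∀ i, (0 : ℝ) < (X k ω i : ℝ) := fun i => by exact_mod_cast hxk i
  -- Step B : C * F k * ∏ (G * D) = C * (Γ(k+b)/Γ(k+a)) * ∏ Γratio
  have hGD : ∀ i, G i k * D i k =
      Real.Gamma ((X k ω i : ℝ) + α i) / Real.Gamma ((X k ω i : ℝ) + β i) *
        ((k : ℝ) ^ (α i - β i))⁻¹ := by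
    intro i
    rw [hG_def, hD_def]
    simp only
    rw [Real.div_rpow (hx0 i).le hk0.le]
    rw [show Real.Gamma ((X k ω i : ℝ) + α i) / Real.Gamma ((X k ω i : ℝ) + β i) *
        (X k ω i : ℝ) ^ (β i - α i) * ((X k ω i : ℝ) ^ (α i - β i) / (k:ℝ) ^ (α i - β i)) =
        Real.Gamma ((X k ω i : ℝ) + α i) / Real.Gamma ((X k ω i : ℝ) + β i) *
        ((X k ω i : ℝ) ^ (β i - α i) * (X k ω i : ℝ) ^ (α i - β i)) *
        ((k:ℝ) ^ (α i - β i))⁻¹ by ring]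
    rw [← Real.rpow_add (hx0 i), show β i - α i + (α i - β i) = 0 by ring, Real.rpow_zero,
      mul_one]
  have hprodGD : ∏ i, (G i k * D i k) =
      (∏ i, Real.Gamma ((X k ω i : ℝ) + α i) / Real.Gamma ((X k ω i : ℝ) + β i)) *
        ((k : ℝ) ^ (a - b))⁻¹ := by
    rw [Finset.prod_congr rfl fun i _ => hGD i, Finset.prod_mul_distrib,
      Finset.prod_inv_distrib, ← Real.rpow_sum_of_pos hk0, ha_def, hb_def,
      ← Finset.sum_sub_distrib]
  have hstepB : C * F k * ∏ i, (G i k * D i k) =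
      C * (Real.Gamma ((k : ℝ) + b) / Real.Gamma ((k : ℝ) + a)) *
        ∏ i, Real.Gamma ((X k ω i : ℝ) + α i) / Real.Gamma ((X k ω i : ℝ) + β i) := by
    have hr : ((k : ℝ) ^ (a - b)) ≠ 0 := (Real.rpow_pos_of_pos hk0 _).ne'
    rw [hprodGD, hF_def]
    simp only
    calc C * (Real.Gamma ((k : ℝ) + b) / Real.Gamma ((k : ℝ) + a) * (k : ℝ) ^ (a - b)) *
        ((∏ i, Real.Gamma ((X k ω i : ℝ) + α i) / Real.Gamma ((X k ω i : ℝ) + β i)) *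
          ((k : ℝ) ^ (a - b))⁻¹)
        = C * (Real.Gamma ((k : ℝ) + b) / Real.Gamma ((k : ℝ) + a)) *
          (∏ i, Real.Gamma ((X k ω i : ℝ) + α i) / Real.Gamma ((X k ω i : ℝ) + β i)) *
          ((k : ℝ) ^ (a - b) * ((k : ℝ) ^ (a - b))⁻¹) := by ring
      _ = _ := by rw [mul_inv_cancel₀ hr, mul_one]
  rw [hstepB]
  -- Step A : Y k ω equals the same expression
  rw [hY]
  unfold dirichletMultinomial
  rw [← ha_def, ← hb_def]
  have e1 : ∀ γ : Fin M → ℝ, (∏ i, Real.Gamma ((X k ω i : ℝ) + γ i) /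
      (((X k ω i).factorial : ℝ) * Real.Gamma (γ i))) =
      (∏ i, Real.Gamma ((X k ω i : ℝ) + γ i)) /
      ((∏ i, ((X k ω i).factorial : ℝ)) * ∏ i, Real.Gamma (γ i)) := by
    intro γ
    rw [Finset.prod_div_distrib, Finset.prod_mul_distrib]
  rw [e1 α, e1 β, hC_def]
  have h1 : Real.Gamma ((k:ℝ) + a) ≠ 0 := (Real.Gamma_pos_of_pos (by positivity)).ne'
  have h2 : Real.Gamma ((k:ℝ) + b) ≠ 0 := (Real.Gamma_pos_of_pos (by positivity)).ne'
  have h3 : Real.Gamma a ≠ 0 := (Real.Gamma_pos_of_pos ha).ne'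
  have h4 : Real.Gamma b ≠ 0 := (Real.Gamma_pos_of_pos hb).ne'
  have h5 : (∏ i, Real.Gamma (α i)) ≠ 0 :=
    (Finset.prod_pos fun i _ => Real.Gamma_pos_of_pos (hα i)).ne'
  have h6 : (∏ i, Real.Gamma (β i)) ≠ 0 :=
    (Finset.prod_pos fun i _ => Real.Gamma_pos_of_pos (hβ i)).ne'
  have h7 : (∏ i, Real.Gamma ((X k ω i : ℝ) + α i)) ≠ 0 :=
    (Finset.prod_pos fun i _ => Real.Gamma_pos_of_pos (by have := hα i; positivity)).ne'
  have h8 : (∏ i, Real.Gamma ((X k ω i : ℝ) + β i)) ≠ 0 :=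
    (Finset.prod_pos fun i _ => Real.Gamma_pos_of_pos (by have := hβ i; positivity)).ne'
  have h9 : (∏ i, ((X k ω i).factorial : ℝ)) ≠ 0 :=
    (Finset.prod_pos fun i _ => by exact_mod_cast (X k ω i).factorial_pos).ne'
  have h10 : ((k.factorial : ℝ)) ≠ 0 := by
    have := k.factorial_pos; positivity
  rw [Finset.prod_div_distrib]
  field_simp
end

section
/- Let M ≥ 1, let p ∈ (0,1)^M with Σ_{i=1}^M p_i = 1, and let Z ∈ ℕ^M be a fixed vector of prior-evidence counts. Let S_1, S_2, ... be an i.i.d. sequence of random variables with values in {1,...,M} and P(S_k = i) = p_i, and let N_k ∈ ℕ^M be the count vector [N_k]_i = #{t ≤ k : S_t = i}. Then, almost surely, lim_{k→∞} Λ(N_k | Z) = (Beta(1)/Beta(Z + 1)) · ∏_{i=1}^M p_i^{Z_i}, where 1 denotes the all-ones vector in ℕ^M. -/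
open Filter MeasureTheory ProbabilityTheory

/-- The multivariate Beta function `Beta(α) = (∏ i, Γ(α i)) / Γ(∑ i, α i)`. -/
noncomputable def mBeta {M : ℕ} (α : Fin M → ℝ) : ℝ :=
  (∏ i, Real.Gamma (α i)) / Real.Gamma (∑ i, α i)

/-- The uncertain likelihood ratio for prior-evidence counts `Z ∈ ℕ^M` and
count vector `N ∈ ℕ^M`:
`Λ(N | Z) = Beta(Z + N + 1)·Beta(1) / (Beta(Z + 1)·Beta(N + 1))`. -/
noncomputable def uncertainLikelihoodRatio {M : ℕ} (N Z : Fin M → ℕ) : ℝ :=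
  (mBeta (fun i => ((Z i : ℝ) + (N i : ℝ) + 1)) * mBeta (fun _ : Fin M => (1 : ℝ))) /
    (mBeta (fun i => ((Z i : ℝ) + 1)) * mBeta (fun i => ((N i : ℝ) + 1)))

lemma fact_add_eq (a b : ℕ) :
    (a + b).factorial = b.factorial * ∏ j ∈ Finset.range a, (b + 1 + j) := by
  induction a with
  | zero => simp
  | succ n ih =>
    rw [Finset.prod_range_succ, ← mul_assoc, ← ih]
    have : n + 1 + b = (n + b) + 1 := by ring
    rw [this, Nat.factorial_succ]
    ring

lemma fact_add_eq_real (a b : ℕ) :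
    ((a + b).factorial : ℝ) = (b.factorial : ℝ) * ∏ j ∈ Finset.range a, ((b : ℝ) + 1 + j) := by
  rw [fact_add_eq]
  push_cast
  ring

lemma mBeta_cast {m : ℕ} (f : Fin (m + 1) → ℕ) :
    mBeta (fun i => (f i : ℝ) + 1) =
      (∏ i, ((f i).factorial : ℝ)) / ((∑ i, f i + m).factorial : ℝ) := by
  unfold mBeta
  congr 1
  · exact Finset.prod_congr rfl fun i _ => Real.Gamma_nat_eq_factorial _
  · have h : (∑ i, ((f i : ℝ) + 1)) = ((∑ i, f i + m : ℕ) : ℝ) + 1 := by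
      push_cast
      rw [Finset.sum_add_distrib]
      simp [Finset.card_univ]
      ring
    rw [h, Real.Gamma_nat_eq_factorial]

lemma ulr_eq {m : ℕ} (N Z : Fin (m + 1) → ℕ) :
    uncertainLikelihoodRatio N Z =
      (mBeta (fun _ : Fin (m + 1) => (1 : ℝ)) / mBeta (fun i => ((Z i : ℝ) + 1))) *
        ((∏ i, ∏ j ∈ Finset.range (Z i), ((N i : ℝ) + 1 + j)) /
          ∏ j ∈ Finset.range (∑ i, Z i), ((∑ i, N i : ℕ) + (m + 1) + (j : ℝ))) := by
  have h1 : mBeta (fun i => ((Z i : ℝ) + (N i : ℝ) + 1)) =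
      (∏ i, (((Z i + N i).factorial : ℝ))) / (((∑ i, (Z i + N i) + m).factorial : ℝ)) := by
    rw [show (fun i => ((Z i : ℝ) + (N i : ℝ) + 1)) = fun i => (((Z i + N i : ℕ) : ℝ) + 1) by
      funext i; push_cast; ring]
    exact mBeta_cast _
  have h2 : mBeta (fun _ : Fin (m + 1) => (1 : ℝ)) = 1 / (m.factorial : ℝ) := by
    have := mBeta_cast (fun _ : Fin (m + 1) => 0)
    simpa using this
  have h3 : mBeta (fun i => ((Z i : ℝ) + 1)) =
      (∏ i, ((Z i).factorial : ℝ)) / ((∑ i, Z i + m).factorial : ℝ) := mBeta_cast _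
  have h4 : mBeta (fun i => ((N i : ℝ) + 1)) =
      (∏ i, ((N i).factorial : ℝ)) / ((∑ i, N i + m).factorial : ℝ) := mBeta_cast _
  have hAE : (∏ i, (((Z i + N i).factorial : ℝ))) =
      (∏ i, ((N i).factorial : ℝ)) * ∏ i, ∏ j ∈ Finset.range (Z i), ((N i : ℝ) + 1 + j) := by
    rw [← Finset.prod_mul_distrib]
    exact Finset.prod_congr rfl fun i _ => fact_add_eq_real _ _
  have hBF : (((∑ i, (Z i + N i) + m).factorial : ℝ)) =
      ((∑ i, N i + m).factorial : ℝ) *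
        ∏ j ∈ Finset.range (∑ i, Z i), ((∑ i, N i : ℕ) + (m + 1) + (j : ℝ)) := by
    rw [show ∑ i, (Z i + N i) + m = (∑ i, Z i) + ((∑ i, N i) + m) by
      rw [Finset.sum_add_distrib]; ring]
    rw [fact_add_eq_real]
    congr 1
    apply Finset.prod_congr rfl
    intro j _
    push_cast
    ring
  have pfac : ∀ n : ℕ, ((n.factorial : ℝ)) ≠ 0 := fun n => by
    exact_mod_cast n.factorial_ne_zero
  have pprodN : (∏ i, ((N i).factorial : ℝ)) ≠ 0 :=
    Finset.prod_ne_zero_iff.2 fun i _ => pfac _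
  have pprodZ : (∏ i, ((Z i).factorial : ℝ)) ≠ 0 :=
    Finset.prod_ne_zero_iff.2 fun i _ => pfac _
  have pbig : (∏ j ∈ Finset.range (∑ i, Z i), ((∑ i, N i : ℕ) + (m + 1) + (j : ℝ))) ≠ 0 := by
    apply Finset.prod_ne_zero_iff.2
    intro j _
    positivity
  unfold uncertainLikelihoodRatio
  rw [h1, h2, h3, h4, hAE, hBF]
  field_simp

lemma tendsto_aux (q : ℝ) (c : ℝ) (a : ℕ → ℕ)
    (ha : Tendsto (fun k => (a k : ℝ) / k) atTop (nhds q)) :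
    Tendsto (fun k => ((a k : ℝ) + c) / k) atTop (nhds q) := by
  have := ha.add (tendsto_const_div_atTop_nhds_zero_nat c)
  rw [add_zero] at this
  apply this.congr
  intro k
  rw [← add_div]

lemma tendsto_ulr {m : ℕ} (p : Fin (m + 1) → ℝ) (hp : ∀ i, 0 < p i) (Z : Fin (m + 1) → ℕ)
    (a : ℕ → Fin (m + 1) → ℕ)
    (ha : ∀ i, Tendsto (fun k => (a k i : ℝ) / k) atTop (nhds (p i)))
    (hsum : ∀ k, ∑ i, a k i = k) :
    Tendsto (fun k => uncertainLikelihoodRatio (a k) Z) atTop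
      (nhds ((mBeta (fun _ : Fin (m + 1) => (1 : ℝ)) / mBeta (fun i => ((Z i : ℝ) + 1))) *
        ∏ i, p i ^ (Z i))) := by
  set C := mBeta (fun _ : Fin (m + 1) => (1 : ℝ)) / mBeta (fun i => ((Z i : ℝ) + 1)) with hC
  -- F and G
  set F : ℕ → ℝ := fun k => ∏ i, ∏ j ∈ Finset.range (Z i), (((a k i : ℝ) + 1 + j) / k) with hF
  set G : ℕ → ℝ := fun k => ∏ j ∈ Finset.range (∑ i, Z i), (((k : ℝ) + (m + 1) + j) / k) with hG
  have hFlim : Tendsto F atTop (nhds (∏ i, p i ^ (Z i))) := by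
    have : Tendsto F atTop (nhds (∏ i, ∏ j ∈ Finset.range (Z i), p i)) := by
      apply tendsto_finset_prod
      intro i _
      apply tendsto_finset_prod
      intro j _
      have : Tendsto (fun k => ((a k i : ℝ) + (1 + j)) / k) atTop (nhds (p i)) :=
        tendsto_aux _ _ _ (ha i)
      apply this.congr
      intro k; ring_nf
    simpa using this
  have hGlim : Tendsto G atTop (nhds 1) := by
    have : Tendsto G atTop (nhds (∏ _j ∈ Finset.range (∑ i, Z i), (1 : ℝ))) := by
      apply tendsto_finset_prod
      intro j _
      have h1 : Tendsto (fun k : ℕ => (k : ℝ) / k) atTop (nhds 1) := by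
        apply Tendsto.congr' _ tendsto_const_nhds
        filter_upwards [eventually_ge_atTop 1] with k hk
        rw [div_self]
        exact_mod_cast Nat.one_le_iff_ne_zero.mp hk
      have h2 := h1.add (tendsto_const_div_atTop_nhds_zero_nat ((m : ℝ) + 1 + j))
      rw [add_zero] at h2
      apply h2.congr
      intro k
      rw [← add_div]
      ring_nf
    simpa using this
  have hdiv : Tendsto (fun k => C * (F k / G k)) atTop (nhds (C * ∏ i, p i ^ (Z i))) := by
    have := (hFlim.div hGlim one_ne_zero)
    rw [div_one] at this
    exact tendsto_const_nhds.mul this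
  apply hdiv.congr' ?_
  filter_upwards [eventually_ge_atTop 1] with k hk
  have hk0 : (k : ℝ) ≠ 0 := by exact_mod_cast Nat.one_le_iff_ne_zero.mp hk
  rw [ulr_eq]
  congr 1
  have hsumN : ((∑ i, a k i : ℕ) : ℝ) = (k : ℝ) := by
    exact_mod_cast congrArg (fun n : ℕ => (n : ℝ)) (hsum k)
  have hFk : F k = (∏ i, ∏ j ∈ Finset.range (Z i), ((a k i : ℝ) + 1 + j)) / (k : ℝ) ^ (∑ i, Z i) := by
    simp only [hF, Finset.prod_div_distrib]
    congr 1
    simp only [Finset.prod_const, Finset.card_range]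
    rw [Finset.prod_pow_eq_pow_sum]
  have hGk : G k = (∏ j ∈ Finset.range (∑ i, Z i), ((∑ i, a k i : ℕ) + (m + 1) + (j : ℝ))) /
      (k : ℝ) ^ (∑ i, Z i) := by
    simp only [hG, Finset.prod_div_distrib, Finset.prod_const, Finset.card_range]
    congr 1
    exact Finset.prod_congr rfl fun j _ => by rw [hsumN]
  rw [hFk, hGk]
  have hkp : ((k : ℝ)) ^ (∑ i, Z i) ≠ 0 := pow_ne_zero _ hk0
  have hB : (∏ j ∈ Finset.range (∑ i, Z i), ((∑ i, a k i : ℕ) + (m + 1) + (j : ℝ))) ≠ 0 := by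
    apply Finset.prod_ne_zero_iff.2
    intro j _
    positivity
  field_simp

/-- For i.i.d. signals with distribution `p` and empirical count vectors `N k`, the
uncertain likelihood ratio converges almost surely:
`Λ(N k | Z) → (Beta(1)/Beta(Z + 1)) · ∏ i, p i ^ (Z i)`. -/
theorem uncertainLikelihoodRatio_tendsto_ae
    (M : ℕ) (hM : 1 ≤ M) (p : Fin M → ℝ) (hp : ∀ i, 0 < p i ∧ p i < 1) (hpsum : ∑ i, p i = 1)
    (Z : Fin M → ℕ)
    {Ω : Type*} [MeasurableSpace Ω] (P : Measure Ω) [IsProbabilityMeasure P]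
    (S : ℕ → Ω → Fin M) (hSmeas : ∀ k, Measurable (S k))
    (hSindep : iIndepFun S P)
    (hSdist : ∀ k i, P {ω | S k ω = i} = ENNReal.ofReal (p i))
    (N : ℕ → Ω → Fin M → ℕ)
    (hN : ∀ k ω i, N k ω i = ((Finset.Icc 1 k).filter (fun t => S t ω = i)).card) :
    ∀ᵐ ω ∂P, Tendsto (fun k => uncertainLikelihoodRatio (N k ω) Z) atTop
      (nhds ((mBeta (fun _ : Fin M => (1 : ℝ)) / mBeta (fun i => ((Z i : ℝ) + 1))) *
        ∏ i, p i ^ (Z i))) := by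
  obtain ⟨m, rfl⟩ : ∃ m, M = m + 1 := ⟨M - 1, by omega⟩
  have hmap : ∀ k l : ℕ, P.map (S k) = P.map (S l) := by
    intro k l
    apply MeasureTheory.Measure.ext_of_singleton
    intro x
    rw [Measure.map_apply (hSmeas k) (measurableSet_singleton x),
        Measure.map_apply (hSmeas l) (measurableSet_singleton x)]
    have hpre : ∀ t : ℕ, S t ⁻¹' {x} = {ω | S t ω = x} := fun t => rfl
    rw [hpre, hpre, hSdist k x, hSdist l x]
  have key : ∀ i : Fin (m + 1), ∀ᵐ ω ∂P,
      Tendsto (fun k => (N k ω i : ℝ) / k) atTop (nhds (p i)) := by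
    intro i
    set f : Fin (m + 1) → ℝ := fun x => if x = i then 1 else 0 with hf
    have hfm : Measurable f := measurable_of_finite f
    set X : ℕ → Ω → ℝ := fun t ω => f (S (t + 1) ω) with hX
    have hident : ∀ t, IdentDistrib (X t) (X 0) P P := by
      intro t
      have h1 : IdentDistrib (S (t + 1)) (S 1) P P :=
        ⟨(hSmeas _).aemeasurable, (hSmeas _).aemeasurable, hmap _ _⟩
      exact h1.comp hfm
    have hindep : Pairwise (Function.onFun (IndepFun · · P) X) := by
      intro s t hst
      exact (hSindep.indepFun (show s + 1 ≠ t + 1 by omega)).comp hfm hfm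
    have hXind : X 0 = Set.indicator {ω | S 1 ω = i} (fun _ => (1 : ℝ)) := by
      funext ω
      simp [hX, hf, Set.indicator_apply, Set.mem_setOf_eq]
    have hmeasS : MeasurableSet {ω | S 1 ω = i} := hSmeas 1 (measurableSet_singleton i)
    have hint : Integrable (X 0) P := by
      rw [hXind]
      exact (integrable_const (1 : ℝ)).indicator hmeasS
    have hmean : P[X 0] = p i := by
      rw [hXind, integral_indicator_const (1 : ℝ) hmeasS, measureReal_def, hSdist 1 i,
        ENNReal.toReal_ofReal (le_of_lt (hp i).1)]
      simp
    have hslln := strong_law_ae_real X hint hindep hident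
    rw [hmean] at hslln
    filter_upwards [hslln] with ω hω
    apply hω.congr
    intro n
    congr 1
    rw [hN]
    rw [Finset.natCast_card_filter]
    rw [← Finset.Ico_add_one_right_eq_Icc, Finset.sum_Ico_eq_sum_range]
    apply Finset.sum_congr rfl
    intro t _
    simp [hX, hf, Nat.add_comm 1 t]
  have key' : ∀ᵐ ω ∂P, ∀ i : Fin (m + 1),
      Tendsto (fun k => (N k ω i : ℝ) / k) atTop (nhds (p i)) := (ae_all_iff).2 key
  filter_upwards [key'] with ω hω
  have hsumk : ∀ k, ∑ i, N k ω i = k := by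
    intro k
    simp only [hN]
    rw [← Finset.card_eq_sum_card_fiberwise (fun t _ => Finset.mem_univ (S t ω))]
    simp [Nat.card_Icc]
  exact tendsto_ulr p (fun i => (hp i).1) Z (fun k => N k ω) hω hsumk
end

section
/- Let M ≥ 1 and let Z, N, N' ∈ ℕ^M with N' = N + e_s for some s ∈ {1,...,M}, where e_s is the s-th standard basis vector. Let R = Σ_{i=1}^M Z_i and t = Σ_{i=1}^M N'_i. Then (Beta(Z + N' + 1)·Beta(N + 1)) / (Beta(N' + 1)·Beta(Z + N + 1)) = ((Z_s + N'_s)(M + t − 1)) / ((R + t + M − 1)·N'_s). -/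
lemma prod_step' {M : ℕ} (f g : Fin M → ℕ) (s : Fin M)
    (h1 : ∀ i, i ≠ s → g i = f i) (h2 : g s = f s + 1) :
    (∏ i, ((g i).factorial : ℝ)) = ((f s : ℝ) + 1) * ∏ i, ((f i).factorial : ℝ) := by
  rw [← Finset.mul_prod_erase Finset.univ _ (Finset.mem_univ s),
      ← Finset.mul_prod_erase Finset.univ (fun i => ((f i).factorial : ℝ)) (Finset.mem_univ s)]
  have he : ∏ i ∈ Finset.univ.erase s, ((g i).factorial : ℝ)
      = ∏ i ∈ Finset.univ.erase s, ((f i).factorial : ℝ) := by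
    apply Finset.prod_congr rfl
    intro i hi
    rw [h1 i (Finset.mem_erase.mp hi).1]
  rw [he, h2]
  push_cast [Nat.factorial_succ]
  ring

set_option maxHeartbeats 1600000 in
/-- One-step identity for the uncertain likelihood ratio: if `N' = N + e_s`, then
`(Beta(Z+N'+1)·Beta(N+1)) / (Beta(N'+1)·Beta(Z+N+1))
  = ((Z_s + N'_s)(M + t − 1)) / ((R + t + M − 1)·N'_s)`,
where `R = Σ Z` and `t = Σ N'`. -/
theorem uncertainLikelihoodRatio_step
    (M : ℕ) (hM : 1 ≤ M) (Z N N' : Fin M → ℕ) (s : Fin M)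
    (hN' : N' = N + Pi.single s 1)
    (R t : ℕ) (hR : R = ∑ i, Z i) (ht : t = ∑ i, N' i) :
    (mBeta (fun i => ((Z i : ℝ) + (N' i : ℝ) + 1)) * mBeta (fun i => ((N i : ℝ) + 1))) /
        (mBeta (fun i => ((N' i : ℝ) + 1)) * mBeta (fun i => ((Z i : ℝ) + (N i : ℝ) + 1))) =
      (((Z s : ℝ) + (N' s : ℝ)) * ((M : ℝ) + (t : ℝ) - 1)) /
        ((((R : ℝ) + (t : ℝ) + (M : ℝ) - 1)) * (N' s : ℝ)) := by
  obtain ⟨m, rfl⟩ : ∃ m, M = m + 1 := ⟨M - 1, (Nat.succ_pred_eq_of_pos hM).symm⟩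
  subst hR
  have hne : ∀ i, i ≠ s → N' i = N i := by
    intro i hi; simp [hN', Pi.single_eq_of_ne hi]
  have hNs' : N' s = N s + 1 := by simp [hN']
  have hsumN' : ∑ i, N' i = (∑ i, N i) + 1 := by
    simp [hN', Finset.sum_add_distrib, Finset.sum_pi_single']
  have hts : t = (∑ i, N i) + 1 := by rw [ht, hsumN']
  subst hts
  unfold mBeta
  have hG : ∀ n : ℕ, Real.Gamma ((n : ℝ) + 1) = n.factorial := Real.Gamma_nat_eq_factorial
  -- the four products
  have p1 : (∏ i, Real.Gamma ((Z i : ℝ) + (N' i : ℝ) + 1))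
      = (((Z s + N s : ℕ) : ℝ) + 1) * ∏ i, (((Z i + N i).factorial : ℝ)) := by
    have p1a : (∏ i, Real.Gamma ((Z i : ℝ) + (N' i : ℝ) + 1))
        = ∏ i, (((Z i + N' i).factorial : ℝ)) := by
      apply Finset.prod_congr rfl
      intro i _
      rw [show (Z i : ℝ) + (N' i : ℝ) = ((Z i + N' i : ℕ) : ℝ) by push_cast; ring, hG]
    rw [p1a]
    exact prod_step' (fun j => Z j + N j) (fun j => Z j + N' j) s
      (fun i hi => by rw [hne i hi]) (by simp only [hNs']; omega)
  have p2 : (∏ i, Real.Gamma ((N i : ℝ) + 1)) = ∏ i, ((N i).factorial : ℝ) :=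
    Finset.prod_congr rfl (fun i _ => hG (N i))
  have p3 : (∏ i, Real.Gamma ((N' i : ℝ) + 1))
      = ((N s : ℝ) + 1) * ∏ i, ((N i).factorial : ℝ) := by
    rw [Finset.prod_congr rfl (fun i _ => hG (N' i))]
    exact prod_step' N N' s hne hNs'
  have p4 : (∏ i, Real.Gamma ((Z i : ℝ) + (N i : ℝ) + 1)) = ∏ i, ((Z i + N i).factorial : ℝ) :=
    Finset.prod_congr rfl (fun i _ => by
      rw [show (Z i : ℝ) + (N i : ℝ) = ((Z i + N i : ℕ) : ℝ) by push_cast; ring, hG])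
  -- the four sums
  have s1 : (∑ i, ((Z i : ℝ) + (N' i : ℝ) + 1))
      = (((∑ i, Z i) + (∑ i, N i) + m + 1 : ℕ) : ℝ) + 1 := by
    rw [Finset.sum_add_distrib, Finset.sum_add_distrib, ← Nat.cast_sum, ← Nat.cast_sum, hsumN']
    push_cast
    simp [Finset.card_univ]
    ring
  have s2 : (∑ i, ((N i : ℝ) + 1)) = (((∑ i, N i) + m : ℕ) : ℝ) + 1 := by
    rw [Finset.sum_add_distrib, ← Nat.cast_sum]
    push_cast
    simp [Finset.card_univ]
    ring
  have s3 : (∑ i, ((N' i : ℝ) + 1)) = (((∑ i, N i) + m + 1 : ℕ) : ℝ) + 1 := by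
    rw [Finset.sum_add_distrib, ← Nat.cast_sum, hsumN']
    push_cast
    simp [Finset.card_univ]
    ring
  have s4 : (∑ i, ((Z i : ℝ) + (N i : ℝ) + 1))
      = (((∑ i, Z i) + (∑ i, N i) + m : ℕ) : ℝ) + 1 := by
    rw [Finset.sum_add_distrib, Finset.sum_add_distrib, ← Nat.cast_sum, ← Nat.cast_sum]
    push_cast
    simp [Finset.card_univ]
    ring
  rw [p1, p2, p3, p4, s1, s2, s3, s4, hG, hG, hG, hG]
  have hA : (0 : ℝ) < ∏ i, ((Z i + N i).factorial : ℝ) :=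
    Finset.prod_pos (fun i _ => by positivity)
  have hB : (0 : ℝ) < ∏ i, ((N i).factorial : ℝ) :=
    Finset.prod_pos (fun i _ => by positivity)
  have f2 : (0:ℝ) < (((∑ i, N i) + m).factorial : ℝ) := by positivity
  have f4 : (0:ℝ) < (((∑ i, Z i) + (∑ i, N i) + m).factorial : ℝ) := by positivity
  rw [hNs']
  rw [show ((∑ i, Z i) + (∑ i, N i) + m + 1).factorial
      = ((∑ i, Z i) + (∑ i, N i) + m + 1) * ((∑ i, Z i) + (∑ i, N i) + m).factorial from
      Nat.factorial_succ _,
    show ((∑ i, N i) + m + 1).factorial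
      = ((∑ i, N i) + m + 1) * ((∑ i, N i) + m).factorial from Nat.factorial_succ _]
  push_cast
  set A := ∏ i, ((Z i + N i).factorial : ℝ) with hAdef
  set B := ∏ i, ((N i).factorial : ℝ) with hBdef
  set C := (((∑ i, Z i) + (∑ i, N i) + m).factorial : ℝ) with hCdef
  set D := (((∑ i, N i) + m).factorial : ℝ) with hDdef
  set X := ∑ i, ((Z i : ℝ)) with hXdef
  set Y := ∑ i, ((N i : ℝ)) with hYdef
  have hX0 : (0:ℝ) ≤ X := Finset.sum_nonneg (fun i _ => by positivity)
  have hY0 : (0:ℝ) ≤ Y := Finset.sum_nonneg (fun i _ => by positivity)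
  have hx1 : (0:ℝ) < X + Y + ↑m + 1 := by
    have hm : (0:ℝ) ≤ (m:ℝ) := Nat.cast_nonneg m
    linarith
  have hx2 : (0:ℝ) < Y + ↑m + 1 := by
    have hm : (0:ℝ) ≤ (m:ℝ) := Nat.cast_nonneg m
    linarith
  have hx3 : ((N s : ℝ) + 1) ≠ 0 := by positivity
  have hA' : A ≠ 0 := ne_of_gt hA
  have hB' : B ≠ 0 := ne_of_gt hB
  have hC' : C ≠ 0 := ne_of_gt f4
  have hD' : D ≠ 0 := ne_of_gt f2
  have aux : ∀ a b c d e f g h : ℝ, b ≠ 0 → d ≠ 0 → e ≠ 0 → f ≠ 0 → g ≠ 0 → h ≠ 0 →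
      (a/b * (c/d)) / (e/f * (g/h)) = (a*c*f*h)/(b*d*e*g) := by
    intro a b c d e f g h hb hd he hf hg hh
    field_simp
  have hb : (X + Y + ↑m + 1) * C ≠ 0 := mul_ne_zero (ne_of_gt hx1) hC'
  have he : ((N s : ℝ) + 1) * B ≠ 0 := mul_ne_zero hx3 hB'
  have hf : (Y + ↑m + 1) * D ≠ 0 := mul_ne_zero (ne_of_gt hx2) hD'
  rw [aux _ _ _ _ _ _ _ _ hb hD' he hf hA' hC']
  have h2a : X + (Y + 1) + ((m:ℝ) + 1) - 1 ≠ 0 := by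
    have h : X + (Y + 1) + ((m:ℝ) + 1) - 1 = X + Y + ↑m + 1 := by ring
    rw [h]; exact ne_of_gt hx1
  rw [div_eq_div_iff
      (mul_ne_zero (mul_ne_zero (mul_ne_zero hb hD') he) hA')
      (mul_ne_zero h2a hx3)]
  ring
end

section
/- Let M ≥ 1, let Z ∈ ℕ^M be a fixed vector of prior-evidence counts with R = Σ_{i=1}^M Z_i, and let s_1, s_2, ..., s_k be any sequence of symbols in {1,...,M} with count vectors N_t ∈ ℕ^M defined by [N_t]_i = #{τ ≤ t : s_τ = i}. Then the uncertain likelihood ratio satisfies Λ(N_k | Z) = ∏_{t=1}^{k} ℓ(s_t, N_t), where ℓ(s, N_t) = ((Z_s + [N_t]_s)(M + t − 1)) / ((R + t + M − 1)·[N_t]_s). -/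
lemma gamma_sum_fact (m : ℕ) (f : Fin (m+1) → ℕ) :
    Real.Gamma (∑ i, ((f i : ℝ) + 1)) = ((∑ i, f i) + m).factorial := by
  have h : (∑ i, ((f i : ℝ) + 1)) = (((∑ i, f i) + m : ℕ) : ℝ) + 1 := by
    push_cast
    rw [Finset.sum_add_distrib]
    simp [Finset.card_univ]
    ring
  rw [h, Real.Gamma_nat_eq_factorial]

lemma mBeta_fact (m : ℕ) (f : Fin (m+1) → ℕ) :
    mBeta (fun i => ((f i : ℝ) + 1)) =
      (∏ i, ((f i).factorial : ℝ)) / ((∑ i, f i) + m).factorial := by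
  unfold mBeta
  rw [gamma_sum_fact]
  congr 1
  apply Finset.prod_congr rfl
  intro i _
  rw [Real.Gamma_nat_eq_factorial]

lemma ulr_fact (m : ℕ) (Z N : Fin (m+1) → ℕ) :
    uncertainLikelihoodRatio N Z =
      ((∏ i, ((Z i + N i).factorial : ℝ)) * ((∑ i, Z i) + m).factorial *
        ((∑ i, N i) + m).factorial) /
      ((((∑ i, Z i) + (∑ i, N i) + m).factorial) * (m.factorial) *
        (∏ i, ((Z i).factorial : ℝ)) * (∏ i, ((N i).factorial : ℝ))) := by
  unfold uncertainLikelihoodRatio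
  have h1 : (fun i => ((Z i : ℝ) + (N i : ℝ) + 1)) = fun i => (((Z i + N i : ℕ) : ℝ) + 1) := by
    funext i; push_cast; ring
  rw [h1, mBeta_fact, mBeta_fact, mBeta_fact]
  have h0 : mBeta (fun _ : Fin (m+1) => (1:ℝ)) = 1 / (m.factorial : ℝ) := by
    have : (fun _ : Fin (m+1) => (1:ℝ)) = fun i => (((fun _ => 0 : Fin (m+1) → ℕ) i : ℝ) + 1) := by
      funext i; simp
    rw [this, mBeta_fact]
    simp
  rw [h0]
  rw [show (∑ i, (Z i + N i)) = (∑ i, Z i) + (∑ i, N i) from Finset.sum_add_distrib]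
  have hZ : (0:ℝ) < ∏ i, ((Z i).factorial : ℝ) :=
    Finset.prod_pos fun i _ => by positivity
  have hN : (0:ℝ) < ∏ i, ((N i).factorial : ℝ) :=
    Finset.prod_pos fun i _ => by positivity
  field_simp
lemma prod_fact_step (m : ℕ) (f : Fin (m+1) → ℕ) (j : Fin (m+1)) :
    (∏ i, (((f i + if j = i then 1 else 0).factorial : ℝ))) =
      ((f j : ℝ) + 1) * ∏ i, ((f i).factorial : ℝ) := by
  have : ∀ i ∈ Finset.univ, ((f i + if j = i then 1 else 0).factorial : ℝ) =
      (if j = i then ((f i : ℝ) + 1) else 1) * ((f i).factorial : ℝ) := by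
    intro i _
    by_cases h : j = i
    · simp [h, Nat.factorial_succ]
    · simp [h]
  rw [Finset.prod_congr rfl this, Finset.prod_mul_distrib, Finset.prod_ite_eq]
  simp


set_option maxHeartbeats 2000000 in
/-- Iterative representation of the uncertain likelihood ratio: for any sequence of
symbols `s 1, …, s k` with running count vectors `N t`,
`Λ(N k | Z) = ∏_{t=1}^k ℓ(s t, N t)` where
`ℓ(s, N t) = ((Z_s + [N t]_s)(M + t − 1)) / ((R + t + M − 1)·[N t]_s)` and `R = Σ Z`. -/
theorem uncertainLikelihoodRatio_prod
    (M : ℕ) (hM : 1 ≤ M) (Z : Fin M → ℕ) (R : ℕ) (hR : R = ∑ i, Z i)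
    (s : ℕ → Fin M) (N : ℕ → Fin M → ℕ)
    (hN : ∀ t i, N t i = ((Finset.Icc 1 t).filter (fun τ => s τ = i)).card) (k : ℕ) :
    uncertainLikelihoodRatio (N k) Z =
      ∏ t ∈ Finset.Icc 1 k,
        (((Z (s t) : ℝ) + (N t (s t) : ℝ)) * ((M : ℝ) + (t : ℝ) - 1)) /
          (((R : ℝ) + (t : ℝ) + (M : ℝ) - 1) * (N t (s t) : ℝ)) := by
  obtain ⟨m, rfl⟩ : ∃ m, M = m + 1 := ⟨M - 1, (Nat.succ_pred_eq_of_pos hM).symm⟩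
  subst hR
  have hsum : ∀ t, (∑ i, N t i) = t := by
    intro t
    calc ∑ i, N t i = ∑ i : Fin (m+1), ((Finset.Icc 1 t).filter (fun τ => s τ = i)).card :=
          Finset.sum_congr rfl fun i _ => hN t i
      _ = (Finset.Icc 1 t).card :=
          (Finset.card_eq_sum_card_fiberwise (fun x _ => Finset.mem_univ (s x))).symm
      _ = t := by simp
  have hstep : ∀ t i, N (t+1) i = N t i + if s (t+1) = i then 1 else 0 := by
    intro t i
    rw [hN, hN]
    have hins : Finset.Icc 1 (t+1) = insert (t+1) (Finset.Icc 1 t) := by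
      ext x; simp [Finset.mem_Icc]; omega
    rw [hins, Finset.filter_insert]
    by_cases h : s (t+1) = i
    · rw [if_pos h, Finset.card_insert_of_notMem (by simp), if_pos h]
    · simp [h]
  induction k with
  | zero =>
    have hN0 : ∀ i, N 0 i = 0 := fun i => by simp [hN]
    rw [ulr_fact, hsum 0]
    rw [show Finset.Icc 1 0 = ∅ from Finset.Icc_eq_empty (by omega), Finset.prod_empty]
    rw [show (∏ i, (((Z i + N 0 i).factorial : ℝ))) = ∏ i, ((Z i).factorial : ℝ) from
        Finset.prod_congr rfl fun i _ => by rw [hN0, Nat.add_zero]]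
    rw [show (∏ i, (((N 0 i).factorial : ℝ))) = 1 from
        Finset.prod_congr rfl (fun i _ => by rw [hN0]; norm_num) |>.trans (Finset.prod_const_one)]
    rw [show (∑ i, Z i) + 0 + m = (∑ i, Z i) + m from by ring, Nat.zero_add]
    rw [div_eq_one_iff_eq (by positivity)]
    ring
  | succ k ih =>
    rw [Finset.prod_Icc_succ_top (Nat.le_add_left 1 k), ← ih]
    set j := s (k+1) with hj
    have hNk1 : N (k+1) = fun i => N k i + if j = i then 1 else 0 := by
      funext i; rw [hstep]
    have e3 : N (k+1) j = N k j + 1 := by rw [hstep]; simp [hj]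
    have hl : (((Z j : ℝ) + (N (k+1) j : ℝ)) * (((m+1 : ℕ) : ℝ) + ((k+1 : ℕ) : ℝ) - 1)) /
          ((((∑ i, Z i : ℕ) : ℝ) + ((k+1 : ℕ) : ℝ) + ((m+1 : ℕ) : ℝ) - 1) * (N (k+1) j : ℝ))
        = (((Z j : ℝ) + (N k j : ℝ) + 1) * ((k : ℝ) + (m : ℝ) + 1)) /
          ((((∑ i, Z i : ℕ) : ℝ) + (k : ℝ) + (m : ℝ) + 1) * ((N k j : ℝ) + 1)) := by
      rw [e3]; push_cast; congr 1 <;> ring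
    rw [hl, ulr_fact, ulr_fact]
    have e1 : (∏ i, (((Z i + N (k+1) i).factorial : ℝ))) =
        ((Z j : ℝ) + (N k j : ℝ) + 1) * ∏ i, ((Z i + N k i).factorial : ℝ) := by
      rw [hNk1]
      calc (∏ i, ((Z i + (N k i + if j = i then 1 else 0)).factorial : ℝ))
          = ∏ i, (((Z i + N k i) + if j = i then 1 else 0).factorial : ℝ) := by
            apply Finset.prod_congr rfl; intro i _; rw [← Nat.add_assoc]
        _ = _ := by rw [prod_fact_step]; push_cast; ring
    have e2 : (∏ i, (((N (k+1) i).factorial : ℝ))) =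
        ((N k j : ℝ) + 1) * ∏ i, ((N k i).factorial : ℝ) := by
      rw [hNk1, prod_fact_step]
    rw [e1, e2, hsum, hsum]
    rw [show ((∑ i, Z i) + (k+1) + m).factorial
        = ((∑ i, Z i) + k + m + 1) * ((∑ i, Z i) + k + m).factorial from by
      rw [show (∑ i, Z i) + (k+1) + m = ((∑ i, Z i) + k + m) + 1 from by ring, Nat.factorial_succ]]
    rw [show ((k+1) + m).factorial = (k + m + 1) * (k + m).factorial from by
      rw [show (k+1) + m = (k + m) + 1 from by ring, Nat.factorial_succ]]
    have hfN : (0:ℝ) < ∏ i, ((N k i).factorial : ℝ) :=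
      Finset.prod_pos fun i _ => by positivity
    push_cast
    rw [div_mul_div_comm, div_eq_div_iff (by positivity) (by positivity)]
    ring
end

section
/- Let M ≥ 2 and let p, q₁, q₂ ∈ (0,1)^M be probability vectors on {1,...,M} (each with entries summing to 1 and everywhere positive) such that D_KL(p ∥ q₁) < D_KL(p ∥ q₂). Let S_1, S_2, ... be i.i.d. random variables with P(S_k = i) = p_i. Define beliefs μ_k on the two-element hypothesis set {1, 2} by μ_0(1), μ_0(2) > 0 and the Bayesian recursion μ_{k+1}(θ) = q_θ(S_{k+1}) μ_k(θ) / (q₁(S_{k+1}) μ_k(1) + q₂(S_{k+1}) μ_k(2)). Then, almost surely, lim_{k→∞} μ_k(2) = 0. -/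
open Filter MeasureTheory ProbabilityTheory

/-- Kullback–Leibler divergence `D_KL(p ∥ q) = Σ i, p i * log (p i / q i)` between
finite probability vectors. -/
noncomputable def klDiv' {M : ℕ} (p q : Fin M → ℝ) : ℝ :=
  ∑ i, p i * Real.log (p i / q i)

/-- Bayesian learning with two hypotheses whose likelihoods are `q 0` and `q 1`: if the
observations are i.i.d. with distribution `p` and `D_KL(p ∥ q 0) < D_KL(p ∥ q 1)`, then the
belief on the second hypothesis vanishes almost surely. -/
theorem bayesian_belief_on_worse_hypothesis_tendsto_zero
    (M : ℕ) (hM : 2 ≤ M)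
    (p : Fin M → ℝ) (hp : ∀ i, 0 < p i ∧ p i < 1) (hpsum : ∑ i, p i = 1)
    (q : Fin 2 → Fin M → ℝ) (hq : ∀ θ i, 0 < q θ i ∧ q θ i < 1)
    (hqsum : ∀ θ, ∑ i, q θ i = 1)
    (hKL : klDiv' p (q 0) < klDiv' p (q 1))
    {Ω : Type*} [MeasurableSpace Ω] (P : Measure Ω) [IsProbabilityMeasure P]
    (S : ℕ → Ω → Fin M) (hSmeas : ∀ k, Measurable (S k))
    (hSindep : iIndepFun S P)
    (hSdist : ∀ k i, P {ω | S k ω = i} = ENNReal.ofReal (p i))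
    (μ₀ : Fin 2 → ℝ) (hμ₀ : ∀ θ, 0 < μ₀ θ)
    (μ : ℕ → Ω → Fin 2 → ℝ) (hμ0 : ∀ ω θ, μ 0 ω θ = μ₀ θ)
    (hμrec : ∀ k ω θ, μ (k + 1) ω θ =
      q θ (S (k + 1) ω) * μ k ω θ /
        (q 0 (S (k + 1) ω) * μ k ω 0 + q 1 (S (k + 1) ω) * μ k ω 1)) :
    ∀ᵐ ω ∂P, Tendsto (fun k => μ k ω 1) atTop (nhds 0) := by
  classical
  -- the log-likelihood-ratio function and process
  set f : Fin M → ℝ := fun i => Real.log (q 1 i / q 0 i) with hfdef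
  set X : ℕ → Ω → ℝ := fun k ω => f (S (k + 1) ω) with hXdef
  have hfm : Measurable f := measurable_of_countable f
  have hXm : ∀ k, Measurable (X k) := fun k => hfm.comp (hSmeas (k + 1))
  -- boundedness hence integrability
  have hfb : ∀ i, |f i| ≤ ∑ j, |f j| := fun i =>
    Finset.single_le_sum (fun j _ => abs_nonneg (f j)) (Finset.mem_univ i)
  have hint : Integrable (X 0) P := by
    refine (integrable_const (∑ j, |f j|)).mono' (hXm 0).aestronglyMeasurable ?_
    exact ae_of_all _ fun ω => by simpa [Real.norm_eq_abs] using hfb (S 1 ω)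
  -- identical distribution
  have hmap : ∀ k, Measure.map (S k) P = Measure.map (S 1) P := by
    intro k
    refine Measure.ext_of_singleton fun i => ?_
    rw [Measure.map_apply (hSmeas k) (measurableSet_singleton i),
      Measure.map_apply (hSmeas 1) (measurableSet_singleton i)]
    have : ∀ m, S m ⁻¹' {i} = {ω | S m ω = i} := fun m => rfl
    rw [this, this, hSdist, hSdist]
  have hident : ∀ k, IdentDistrib (X k) (X 0) P P := by
    intro k
    have : IdentDistrib (S (k + 1)) (S 1) P P :=
      ⟨(hSmeas _).aemeasurable, (hSmeas _).aemeasurable, hmap (k + 1)⟩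
    exact this.comp hfm
  -- pairwise independence
  have hindep : Pairwise (Function.onFun (IndepFun · · P) X) := by
    intro i j hij
    exact (hSindep.indepFun (show i + 1 ≠ j + 1 by omega)).comp hfm hfm
  -- the mean
  have hmean : ∫ ω, X 0 ω ∂P = ∑ i, p i * f i := by
    have h1 : ∫ ω, X 0 ω ∂P = ∫ y, f y ∂(Measure.map (S 1) P) :=
      (integral_map (hSmeas 1).aemeasurable hfm.aestronglyMeasurable).symm
    have : IsProbabilityMeasure (Measure.map (S 1) P) :=
      Measure.isProbabilityMeasure_map (hSmeas 1).aemeasurable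
    rw [h1, integral_fintype .of_finite]
    refine Finset.sum_congr rfl fun i _ => ?_
    rw [Measure.real, Measure.map_apply (hSmeas 1) (measurableSet_singleton i)]
    have : S 1 ⁻¹' {i} = {ω | S 1 ω = i} := rfl
    rw [this, hSdist, ENNReal.toReal_ofReal (hp i).1.le, smul_eq_mul]
  have hLneg : ∑ i, p i * f i < 0 := by
    have : ∑ i, p i * f i = klDiv' p (q 0) - klDiv' p (q 1) := by
      rw [klDiv', klDiv', ← Finset.sum_sub_distrib]
      refine Finset.sum_congr rfl fun i _ => ?_
      show p i * Real.log (q 1 i / q 0 i) = _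
      rw [Real.log_div (hq 1 i).1.ne' (hq 0 i).1.ne',
        Real.log_div (hp i).1.ne' (hq 0 i).1.ne',
        Real.log_div (hp i).1.ne' (hq 1 i).1.ne']
      ring
    rw [this]
    linarith
  -- strong law of large numbers
  have hSLLN := strong_law_ae_real X hint hindep hident
  rw [hmean] at hSLLN
  filter_upwards [hSLLN] with ω havg
  set L : ℝ := ∑ i, p i * f i with hLdef
  -- positivity of beliefs
  have hpos : ∀ k, 0 < μ k ω 0 ∧ 0 < μ k ω 1 := by
    intro k
    induction k with
    | zero => exact ⟨by rw [hμ0]; exact hμ₀ 0, by rw [hμ0]; exact hμ₀ 1⟩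
    | succ k ih =>
      have hden : 0 < q 0 (S (k + 1) ω) * μ k ω 0 + q 1 (S (k + 1) ω) * μ k ω 1 :=
        add_pos (mul_pos (hq 0 _).1 ih.1) (mul_pos (hq 1 _).1 ih.2)
      constructor
      · rw [hμrec]; exact div_pos (mul_pos (hq 0 _).1 ih.1) hden
      · rw [hμrec]; exact div_pos (mul_pos (hq 1 _).1 ih.2) hden
  -- normalization from step 1 on
  have hsum1 : ∀ k, μ (k + 1) ω 0 + μ (k + 1) ω 1 = 1 := by
    intro k
    have hden : 0 < q 0 (S (k + 1) ω) * μ k ω 0 + q 1 (S (k + 1) ω) * μ k ω 1 :=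
      add_pos (mul_pos (hq 0 _).1 (hpos k).1) (mul_pos (hq 1 _).1 (hpos k).2)
    rw [hμrec, hμrec, ← add_div, div_self hden.ne']
  -- the likelihood-ratio formula
  have hr : ∀ k, μ k ω 1 / μ k ω 0 =
      (μ₀ 1 / μ₀ 0) * Real.exp (∑ j ∈ Finset.range k, X j ω) := by
    intro k
    induction k with
    | zero => simp [hμ0]
    | succ k ih =>
      have hden : 0 < q 0 (S (k + 1) ω) * μ k ω 0 + q 1 (S (k + 1) ω) * μ k ω 1 :=
        add_pos (mul_pos (hq 0 _).1 (hpos k).1) (mul_pos (hq 1 _).1 (hpos k).2)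
      have hstep : μ (k + 1) ω 1 / μ (k + 1) ω 0 =
          (q 1 (S (k + 1) ω) / q 0 (S (k + 1) ω)) * (μ k ω 1 / μ k ω 0) := by
        rw [hμrec, hμrec]
        field_simp
      have hexp : Real.exp (X k ω) = q 1 (S (k + 1) ω) / q 0 (S (k + 1) ω) := by
        rw [hXdef]
        exact Real.exp_log (div_pos (hq 1 _).1 (hq 0 _).1)
      rw [hstep, ih, Finset.sum_range_succ, Real.exp_add, hexp]
      ring
  -- the sum of log-likelihood ratios tends to -∞
  have hsumBot : Tendsto (fun n => ∑ j ∈ Finset.range n, X j ω) atTop atBot := by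
    have hL2 : L / 2 < 0 := by linarith
    have hev : ∀ᶠ n : ℕ in atTop,
        (∑ j ∈ Finset.range n, X j ω) / n ≤ L / 2 :=
      havg.eventually (eventually_le_nhds (by linarith : L < L / 2))
    have hcmp : Tendsto (fun n : ℕ => (L / 2) * n) atTop atBot :=
      (tendsto_const_mul_atBot_of_neg hL2).2 tendsto_natCast_atTop_atTop
    refine tendsto_atBot_mono' atTop ?_ hcmp
    filter_upwards [hev, eventually_ge_atTop 1] with n hn hn1
    have hnpos : (0 : ℝ) < n := by exact_mod_cast hn1
    calc ∑ j ∈ Finset.range n, X j ω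
        = ((∑ j ∈ Finset.range n, X j ω) / n) * n := by field_simp
      _ ≤ (L / 2) * n := mul_le_mul_of_nonneg_right hn hnpos.le
  -- hence the ratio tends to 0
  have hratio : Tendsto (fun k => μ k ω 1 / μ k ω 0) atTop (nhds 0) := by
    have : Tendsto (fun k =>
        (μ₀ 1 / μ₀ 0) * Real.exp (∑ j ∈ Finset.range k, X j ω)) atTop (nhds 0) := by
      have := (Real.tendsto_exp_atBot.comp hsumBot).const_mul (μ₀ 1 / μ₀ 0)
      simpa using this
    exact this.congr fun k => (hr k).symm
  -- squeeze
  refine squeeze_zero' ?_ ?_ hratio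
  · exact Eventually.of_forall fun k => (hpos k).2.le
  · filter_upwards [eventually_ge_atTop 1] with k hk
    obtain ⟨m, rfl⟩ := Nat.exists_eq_add_of_le hk
    have h0lt : 0 < μ (1 + m) ω 0 := (hpos (1 + m)).1
    have h0le1 : μ (1 + m) ω 0 ≤ 1 := by
      have := hsum1 m
      have h1pos := (hpos (m + 1)).2
      have : μ (m + 1) ω 0 ≤ 1 := by linarith
      simpa [Nat.add_comm] using this
    rw [le_div_iff₀ h0lt]
    exact mul_le_of_le_one_right (hpos _).2.le h0le1
end

section
/- Let M ≥ 2. Let p* ∈ (0,1)^M with Σ_i p*_i = 1 and p* not equal to the uniform distribution (1/M,...,1/M), and let p₁ ∈ (0,1)^M with Σ_i (p₁)_i = 1. Consider the two-hypothesis set Θ = {θ₁, θ₂} with θ* = θ₂. For R₁, R₂ ∈ ℕ let Z₁ ~ Multinomial(p₁, R₁) and Z₂ ~ Multinomial(p*, R₂) be independent, defining random surrogate likelihoods q_{θ₁}(s) = ([Z₁]_s + 1)/(R₁ + M) and q_{θ₂}(s) = ([Z₂]_s + 1)/(R₂ + M). Independently of (Z₁, Z₂), let S_1, S_2, ... be i.i.d.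 with P(S_k = i) = p*_i, and define beliefs by μ_0(θ₁), μ_0(θ₂) > 0 and μ_{k+1}(θ) = q_θ(S_{k+1}) μ_k(θ) / (q_{θ₁}(S_{k+1}) μ_k(θ₁) + q_{θ₂}(S_{k+1}) μ_k(θ₂)). Then there exist finite R₁, R₂ ∈ ℕ such that P( lim_{k→∞} μ_k(θ*) = 0 ) > 0. -/
open Filter MeasureTheory ProbabilityTheory

open Topology


theorem gibbs_aux (M : ℕ) (hM : 1 ≤ M) (p : Fin M → ℝ) (hp : ∀ i, 0 < p i)
    (hsum : ∑ i, p i = 1) (hne : p ≠ fun _ => (M : ℝ)⁻¹) :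
    Real.log (M : ℝ)⁻¹ < ∑ i, p i * Real.log (p i) := by
  have hMpos : (0:ℝ) < M := by exact_mod_cast hM
  have hMinv : (0:ℝ) < (M:ℝ)⁻¹ := by positivity
  obtain ⟨i₀, hi₀⟩ : ∃ i, p i ≠ (M:ℝ)⁻¹ := by
    by_contra h; push_neg at h; exact hne (funext h)
  have key : ∑ i, p i * Real.log ((M:ℝ)⁻¹ / p i) < ∑ i, p i * ((M:ℝ)⁻¹ / p i - 1) := by
    apply Finset.sum_lt_sum
    · intro i _
      have hpi := hp i
      have := Real.log_le_sub_one_of_pos (x := (M:ℝ)⁻¹ / p i) (by positivity)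
      nlinarith
    · refine ⟨i₀, Finset.mem_univ _, ?_⟩
      have hpi := hp i₀
      have hne1 : (M:ℝ)⁻¹ / p i₀ ≠ 1 := by
        intro h
        rw [div_eq_one_iff_eq (ne_of_gt hpi)] at h
        exact hi₀ h.symm
      have := Real.log_lt_sub_one_of_pos (x := (M:ℝ)⁻¹ / p i₀) (by positivity) hne1
      nlinarith
  have h2 : ∑ i, p i * ((M:ℝ)⁻¹ / p i - 1) = 0 := by
    have h' : ∀ i ∈ Finset.univ, p i * ((M:ℝ)⁻¹ / p i - 1) = (M:ℝ)⁻¹ - p i := by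
      intro i _
      have hpi := (hp i).ne'
      field_simp
    rw [Finset.sum_congr rfl h', Finset.sum_sub_distrib, hsum]
    simp [Finset.card_univ]
    field_simp
    norm_num
  have h3 : ∀ i ∈ Finset.univ, p i * Real.log ((M:ℝ)⁻¹ / p i)
      = p i * Real.log (M:ℝ)⁻¹ - p i * Real.log (p i) := by
    intro i _
    rw [Real.log_div (ne_of_gt hMinv) (ne_of_gt (hp i))]
    ring
  rw [Finset.sum_congr rfl h3, Finset.sum_sub_distrib, h2, ← Finset.sum_mul, hsum] at key
  linarith


theorem sum_tendsto_atBot_of_avg {a : ℕ → ℝ} {m : ℝ} (hm : m < 0)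
    (h : Tendsto (fun n : ℕ => a n / n) atTop (𝓝 m)) : Tendsto a atTop atBot := by
  have h2 : ∀ᶠ n : ℕ in atTop, a n / n < m / 2 := h.eventually_lt_const (by linarith)
  have h3 : Tendsto (fun n : ℕ => (m / 2) * n) atTop atBot :=
    Tendsto.const_mul_atTop_of_neg (by linarith) tendsto_natCast_atTop_atTop
  apply tendsto_atBot_mono' _ _ h3
  filter_upwards [h2, eventually_ge_atTop 1] with n hn hn1
  have hnpos : (0:ℝ) < n := by exact_mod_cast hn1
  calc a n = (a n / n) * n := by field_simp
    _ ≤ (m / 2) * n := by nlinarith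

theorem exists_good_counts (M : ℕ) (hM : 1 ≤ M) (p : Fin M → ℝ) (hp : ∀ i, 0 < p i)
    (hsum : ∑ i, p i = 1) (hgt : Real.log (M : ℝ)⁻¹ < ∑ i, p i * Real.log (p i)) :
    ∃ x : Fin M → ℕ, Real.log (M : ℝ)⁻¹ <
      ∑ s, p s * Real.log (((x s : ℝ) + 1) / (((∑ i, x i : ℕ) : ℝ) + M)) := by
  have hMpos : (0:ℝ) < M := by exact_mod_cast hM
  set xv : ℕ → Fin M → ℕ := fun N s => ⌊(N : ℝ) * p s⌋₊ with hxv
  set qf : ℕ → Fin M → ℝ :=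
    fun N s => ((xv N s : ℝ) + 1) / (((∑ i, xv N i : ℕ) : ℝ) + M) with hqf
  have hRle : ∀ N : ℕ, ((∑ i, xv N i : ℕ) : ℝ) ≤ N := by
    intro N
    push_cast
    calc ∑ i, ((⌊(N : ℝ) * p i⌋₊ : ℝ)) ≤ ∑ i, (N : ℝ) * p i :=
          Finset.sum_le_sum fun i _ => Nat.floor_le (mul_nonneg (Nat.cast_nonneg N) (hp i).le)
      _ = N := by rw [← Finset.mul_sum, hsum, mul_one]
  have hRge : ∀ N : ℕ, (N : ℝ) ≤ ((∑ i, xv N i : ℕ) : ℝ) + M := by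
    intro N
    push_cast
    have : (N : ℝ) = ∑ i, (N : ℝ) * p i := by rw [← Finset.mul_sum, hsum, mul_one]
    rw [this]
    have : (M : ℝ) = ∑ _i : Fin M, (1 : ℝ) := by simp
    rw [this, ← Finset.sum_add_distrib]
    exact Finset.sum_le_sum fun i _ => (Nat.lt_floor_add_one _).le
  have htq : ∀ s, Tendsto (fun N : ℕ => qf N s) atTop (𝓝 (p s)) := by
    intro s
    have hlow : Tendsto (fun N : ℕ => p s * ((N : ℝ) / ((N : ℝ) + M))) atTop (𝓝 (p s)) := by
      have := (tendsto_natCast_div_add_atTop (M : ℝ)).const_mul (p s)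
      simpa using this
    have hup : Tendsto (fun N : ℕ => p s + 1 / (N : ℝ)) atTop (𝓝 (p s)) := by
      have := Tendsto.add (tendsto_const_nhds (x := p s) (f := (atTop : Filter ℕ)))
        tendsto_one_div_atTop_nhds_zero_nat
      simpa using this
    apply tendsto_of_tendsto_of_tendsto_of_le_of_le' hlow hup
    · filter_upwards [eventually_ge_atTop 1] with N hN
      have hden : (0:ℝ) < ((∑ i, xv N i : ℕ) : ℝ) + M := by positivity
      have h1 : (N : ℝ) * p s ≤ (xv N s : ℝ) + 1 := (Nat.lt_floor_add_one _).le
      rw [mul_div_assoc'] -- p s * (N/(N+M)) = (p s * N)/(N+M)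
      exact div_le_div₀ (by positivity) (by rw [mul_comm]; exact h1) hden
        (by have := hRle N; linarith)
    · filter_upwards [eventually_ge_atTop 1] with N hN
      have hN0 : (0:ℝ) < N := by exact_mod_cast hN
      have h1 : (xv N s : ℝ) + 1 ≤ (N : ℝ) * p s + 1 := by
        have : (xv N s : ℝ) ≤ (N : ℝ) * p s := Nat.floor_le (mul_nonneg (Nat.cast_nonneg N) (hp s).le)
        linarith
      have h2 : qf N s ≤ ((N : ℝ) * p s + 1) / N :=
        div_le_div₀ (by have := (hp s).le; positivity) h1 hN0 (hRge N)
      calc qf N s ≤ ((N : ℝ) * p s + 1) / N := h2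
        _ = p s + 1 / N := by field_simp
  have hlim : Tendsto (fun N : ℕ => ∑ s, p s * Real.log (qf N s)) atTop
      (𝓝 (∑ s, p s * Real.log (p s))) := by
    apply tendsto_finset_sum
    intro s _
    exact (((Real.continuousAt_log (hp s).ne').tendsto.comp (htq s)).const_mul (p s))
  obtain ⟨N, hN⟩ := (hlim.eventually_const_lt hgt).exists
  exact ⟨xv N, hN⟩


lemma ratio_alg (a b C E m D : ℝ) (ha : a ≠ 0) (hD : D ≠ 0) :
    m * (b * (C * E)) / D = a * b / D * (C * (E * (m / a))) := by
  field_simp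

/-- The multinomial probability mass function with probabilities `p` and `R` trials,
evaluated at the count vector `x`. -/
noncomputable def multinomialPMF {M : ℕ} (p : Fin M → ℝ) (R : ℕ) (x : Fin M → ℕ) : ℝ :=
  if ∑ i, x i = R then
    ((R.factorial : ℝ) / ∏ i, ((x i).factorial : ℝ)) * ∏ i, p i ^ x i
  else 0

set_option maxHeartbeats 1000000 in
/-- Bayesian social learning with surrogate likelihoods built from finite prior evidence may
discard the true hypothesis: there exist finite `R₁, R₂` such that the belief on the true
hypothesis `θ₂` converges to zero with positive probability. -/
theorem bayesian_with_surrogates_discards_truth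
    (M : ℕ) (hM : 2 ≤ M)
    (pstar : Fin M → ℝ) (hpstar : ∀ i, 0 < pstar i ∧ pstar i < 1)
    (hpstarsum : ∑ i, pstar i = 1) (hne : pstar ≠ fun _ => (M : ℝ)⁻¹)
    (p₁ : Fin M → ℝ) (hp₁ : ∀ i, 0 < p₁ i ∧ p₁ i < 1) (hp₁sum : ∑ i, p₁ i = 1) :
    ∃ R₁ R₂ : ℕ,
      ∀ (Ω : Type) (_ : MeasurableSpace Ω) (P : Measure Ω), IsProbabilityMeasure P →
        ∀ (Z₁ Z₂ : Ω → Fin M → ℕ), Measurable Z₁ → Measurable Z₂ →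
          IndepFun Z₁ Z₂ P →
          (∀ x : Fin M → ℕ, P {ω | Z₁ ω = x} = ENNReal.ofReal (multinomialPMF p₁ R₁ x)) →
          (∀ x : Fin M → ℕ, P {ω | Z₂ ω = x} = ENNReal.ofReal (multinomialPMF pstar R₂ x)) →
          ∀ (S : ℕ → Ω → Fin M), (∀ k, Measurable (S k)) →
            iIndepFun S P →
            (∀ k i, P {ω | S k ω = i} = ENNReal.ofReal (pstar i)) →
            IndepFun (fun ω => (Z₁ ω, Z₂ ω)) (fun ω => fun k => S k ω) P →
            ∀ (q : Ω → Fin 2 → Fin M → ℝ),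
              (∀ ω s, q ω 0 s = ((Z₁ ω s : ℝ) + 1) / ((R₁ : ℝ) + (M : ℝ))) →
              (∀ ω s, q ω 1 s = ((Z₂ ω s : ℝ) + 1) / ((R₂ : ℝ) + (M : ℝ))) →
              ∀ (μ₀ : Fin 2 → ℝ), (∀ θ, 0 < μ₀ θ) →
                ∀ (μ : ℕ → Ω → Fin 2 → ℝ), (∀ ω θ, μ 0 ω θ = μ₀ θ) →
                  (∀ k ω θ, μ (k + 1) ω θ =
                    q ω θ (S (k + 1) ω) * μ k ω θ /
                      (q ω 0 (S (k + 1) ω) * μ k ω 0 + q ω 1 (S (k + 1) ω) * μ k ω 1)) →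
                  0 < P {ω | Tendsto (fun k => μ k ω 1) atTop (nhds 0)} := by
  have hM1 : 1 ≤ M := le_trans one_le_two hM
  have hMpos : (0:ℝ) < M := by exact_mod_cast hM1
  have hMinv : (0:ℝ) < (M:ℝ)⁻¹ := by positivity
  have hgibbs : Real.log (M:ℝ)⁻¹ < ∑ i, pstar i * Real.log (pstar i) :=
    gibbs_aux M hM1 pstar (fun i => (hpstar i).1) hpstarsum hne
  obtain ⟨x₀, hx₀⟩ := exists_good_counts M hM1 pstar (fun i => (hpstar i).1) hpstarsum hgibbs
  refine ⟨∑ i, x₀ i, 0, ?_⟩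
  intro Ω mΩ P hP Z₁ Z₂ hZ₁m hZ₂m hindepZ hlawZ₁ hlawZ₂ S hSm hiS hlawS _hZS
    q hq0 hq1 μ₀ hμ₀ μ hμini hμrec
  set R₁ : ℕ := ∑ i, x₀ i with hR₁
  clear_value R₁
  set qf : Fin M → ℝ := fun s => ((x₀ s : ℝ) + 1) / ((R₁ : ℝ) + M) with hqf
  clear_value qf
  have hqfpos : ∀ s, 0 < qf s := fun s => by simp only [hqf]; positivity
  set f0 : Fin M → ℝ := fun s => Real.log ((M:ℝ)⁻¹ / qf s) with hf0
  clear_value f0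
  set X : ℕ → Ω → ℝ := fun k ω => f0 (S (k+1) ω) with hX
  clear_value X
  have hf0m : Measurable f0 := measurable_of_countable _
  have hXm : ∀ k, Measurable (X k) := by
    intro k; simp only [hX]; exact hf0m.comp (hSm (k+1))
  -- identical distributions
  have hmap : ∀ k, P.map (S k) = P.map (S 1) := by
    intro k
    apply MeasureTheory.Measure.ext_of_singleton
    intro a
    rw [Measure.map_apply (hSm k) (measurableSet_singleton a),
        Measure.map_apply (hSm 1) (measurableSet_singleton a)]
    have e1 : S k ⁻¹' {a} = {ω | S k ω = a} := rfl
    have e2 : S 1 ⁻¹' {a} = {ω | S 1 ω = a} := rfl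
    rw [e1, e2, hlawS k a, hlawS 1 a]
  have hident : ∀ i, IdentDistrib (X i) (X 0) P P := by
    intro i
    have h1 : IdentDistrib (S (i+1)) (S 1) P P :=
      ⟨(hSm _).aemeasurable, (hSm 1).aemeasurable, hmap _⟩
    simp only [hX]
    exact h1.comp hf0m
  have hindepX : Pairwise (Function.onFun (IndepFun · · P) X) := by
    intro i j hij
    simp only [Function.onFun, hX]
    exact (hiS.indepFun (by omega : i + 1 ≠ j + 1)).comp hf0m hf0m
  have hint : Integrable (X 0) P := by
    have h1 : Integrable f0 (P.map (S 1)) := .of_finite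
    have h2 := (integrable_map_measure hf0m.aestronglyMeasurable (hSm 1).aemeasurable).mp h1
    simp only [hX]
    exact h2
  have hmean : P[X 0] = ∑ s, pstar s * f0 s := by
    haveI : IsProbabilityMeasure (P.map (S 1)) := Measure.isProbabilityMeasure_map (hSm 1).aemeasurable
    have h1 : P[X 0] = ∫ x, f0 x ∂(P.map (S 1)) := by
      rw [integral_map (hSm 1).aemeasurable hf0m.aestronglyMeasurable]
      simp only [hX]
    rw [h1, integral_fintype .of_finite]
    apply Finset.sum_congr rfl
    intro s _
    rw [Measure.real, Measure.map_apply (hSm 1) (measurableSet_singleton s)]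
    have e : S 1 ⁻¹' {s} = {ω | S 1 ω = s} := rfl
    rw [e, hlawS 1 s, ENNReal.toReal_ofReal (hpstar s).1.le]
    simp [smul_eq_mul]
  have hmean_neg : P[X 0] < 0 := by
    rw [hmean]
    have e : ∀ s ∈ Finset.univ, pstar s * f0 s
        = pstar s * Real.log (M:ℝ)⁻¹ - pstar s * Real.log (qf s) := by
      intro s _
      simp only [hf0]
      rw [Real.log_div (ne_of_gt hMinv) (ne_of_gt (hqfpos s))]
      ring
    rw [Finset.sum_congr rfl e, Finset.sum_sub_distrib, ← Finset.sum_mul, hpstarsum, one_mul]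
    have h2 : Real.log (M:ℝ)⁻¹ < ∑ s, pstar s * Real.log (qf s) := by
      simp only [hqf]
      exact hx₀
    linarith
  -- the a.s. SLLN event
  have hae := strong_law_ae_real X hint hindepX hident
  set B : Set Ω := {ω | Tendsto (fun n : ℕ => (∑ i ∈ Finset.range n, X i ω) / n)
    atTop (nhds (P[X 0]))} with hB
  have hBc : P Bᶜ = 0 := by
    rw [hB, Set.compl_setOf]
    exact ae_iff.mp hae
  -- the positive-probability event on the evidence
  set A : Set Ω := {ω | Z₁ ω = x₀} ∩ {ω | Z₂ ω = fun _ => 0} with hA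
  have hPA : 0 < P A := by
    have e1 : {ω | Z₁ ω = x₀} = Z₁ ⁻¹' {x₀} := rfl
    have e2 : {ω | Z₂ ω = fun _ => 0} = Z₂ ⁻¹' {fun _ => 0} := rfl
    have hm1 : 0 < multinomialPMF p₁ R₁ x₀ := by
      have hval : multinomialPMF p₁ R₁ x₀
          = ((R₁.factorial : ℝ) / ∏ i, ((x₀ i).factorial : ℝ)) * ∏ i, p₁ i ^ x₀ i := by
        simp only [multinomialPMF]
        rw [if_pos hR₁.symm]
      rw [hval]
      have h1 : (0:ℝ) < (R₁.factorial : ℝ) / ∏ i, ((x₀ i).factorial : ℝ) := by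
        apply div_pos
        · exact_mod_cast Nat.factorial_pos R₁
        · apply Finset.prod_pos; intro i _; exact_mod_cast Nat.factorial_pos _
      have h2 : (0:ℝ) < ∏ i, p₁ i ^ x₀ i := by
        apply Finset.prod_pos; intro i _; exact pow_pos (hp₁ i).1 _
      exact mul_pos h1 h2
    have hm2 : 0 < multinomialPMF pstar 0 (fun _ => 0) := by
      have hval : multinomialPMF pstar 0 (fun _ => 0) = (1:ℝ) := by
        simp [multinomialPMF, Nat.factorial]
      rw [hval]
      norm_num
    rw [hA, e1, e2, hindepZ.measure_inter_preimage_eq_mul {x₀} {fun _ => 0}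
      (measurableSet_singleton _) (measurableSet_singleton _), ← e1, ← e2,
      hlawZ₁ x₀, hlawZ₂ (fun _ => 0)]
    exact ENNReal.mul_pos (ne_of_gt (ENNReal.ofReal_pos.mpr hm1))
      (ne_of_gt (ENNReal.ofReal_pos.mpr hm2))
  -- inclusion
  have hsub : A ∩ B ⊆ {ω | Tendsto (fun k => μ k ω 1) atTop (nhds 0)} := by
    rintro ω ⟨⟨hZ1ω, hZ2ω⟩, hBω⟩
    have hZ1ω : Z₁ ω = x₀ := hZ1ω
    have hZ2ω : Z₂ ω = fun _ => 0 := hZ2ω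
    have hBω : Tendsto (fun n : ℕ => (∑ i ∈ Finset.range n, X i ω) / n)
        atTop (nhds (P[X 0])) := hBω
    have hq0ω : ∀ s, q ω 0 s = qf s := by
      intro s
      rw [hq0 ω s, hZ1ω]
      simp only [hqf]
    have hq1ω : ∀ s, q ω 1 s = (M:ℝ)⁻¹ := by
      intro s
      rw [hq1 ω s, hZ2ω]
      simp [one_div]
    have key : ∀ k, 0 < μ k ω 0 ∧ 0 < μ k ω 1 ∧
        μ k ω 1 = μ k ω 0 * ((μ₀ 1 / μ₀ 0) * Real.exp (∑ i ∈ Finset.range k, X i ω)) := by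
      intro k
      induction k with
      | zero =>
        refine ⟨by rw [hμini]; exact hμ₀ 0, by rw [hμini]; exact hμ₀ 1, ?_⟩
        rw [hμini, hμini]
        simp only [Finset.range_zero, Finset.sum_empty, Real.exp_zero, mul_one]
        have h00 : μ₀ 0 ≠ 0 := (hμ₀ 0).ne'
        field_simp
      | succ k ih =>
        obtain ⟨h0, h1, hr⟩ := ih
        have hqs := hqfpos (S (k+1) ω)
        have hD : 0 < qf (S (k+1) ω) * μ k ω 0 + (M:ℝ)⁻¹ * μ k ω 1 :=
          add_pos (mul_pos hqs h0) (mul_pos hMinv h1)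
        have e0 := hμrec k ω 0
        have e1 := hμrec k ω 1
        rw [hq0ω, hq1ω] at e0 e1
        refine ⟨?_, ?_, ?_⟩
        · rw [e0]; exact div_pos (mul_pos hqs h0) hD
        · rw [e1]; exact div_pos (mul_pos hMinv h1) hD
        · rw [e0, e1, Finset.sum_range_succ, Real.exp_add]
          have hXk : Real.exp (X k ω) = (M:ℝ)⁻¹ / qf (S (k+1) ω) := by
            simp only [hX, hf0]
            exact Real.exp_log (div_pos hMinv hqs)
          rw [hr, hXk]
          have hD' := hD
          rw [hr] at hD'
          exact ratio_alg _ _ _ _ _ _ hqs.ne' hD'.ne'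
    have hbound : ∀ k, μ (k+1) ω 0 ≤ 1 := by
      intro k
      obtain ⟨h0, h1, _⟩ := key k
      have hqs := hqfpos (S (k+1) ω)
      have hD : 0 < qf (S (k+1) ω) * μ k ω 0 + (M:ℝ)⁻¹ * μ k ω 1 :=
        add_pos (mul_pos hqs h0) (mul_pos hMinv h1)
      have e0 := hμrec k ω 0
      rw [hq0ω, hq1ω] at e0
      rw [e0, div_le_one hD]
      nlinarith [mul_pos hMinv h1]
    have hsumbot : Tendsto (fun n => ∑ i ∈ Finset.range n, X i ω) atTop atBot :=
      sum_tendsto_atBot_of_avg hmean_neg hBω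
    have hexp : Tendsto (fun n : ℕ => Real.exp (∑ i ∈ Finset.range n, X i ω)) atTop (nhds 0) :=
      Real.tendsto_exp_atBot.comp hsumbot
    have hC : Tendsto (fun n : ℕ => (μ₀ 1 / μ₀ 0) * Real.exp (∑ i ∈ Finset.range n, X i ω))
        atTop (nhds 0) := by
      have := hexp.const_mul (μ₀ 1 / μ₀ 0)
      simpa using this
    simp only [Set.mem_setOf_eq]
    apply tendsto_of_tendsto_of_tendsto_of_le_of_le' tendsto_const_nhds hC
    · filter_upwards with k
      exact (key k).2.1.le
    · filter_upwards [eventually_ge_atTop 1] with k hk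
      obtain ⟨k', rfl⟩ : ∃ k', k = k' + 1 := ⟨k - 1, by omega⟩
      obtain ⟨h0, h1, hr⟩ := key (k'+1)
      rw [hr]
      have hnn : (0:ℝ) ≤ (μ₀ 1 / μ₀ 0) * Real.exp (∑ i ∈ Finset.range (k'+1), X i ω) := by
        have h1' := (hμ₀ 0).le
        have h2' := (hμ₀ 1).le
        positivity
      nlinarith [hbound k']
  calc (0 : ENNReal) < P A := hPA
    _ = P (A ∩ B) := (measure_inter_conull hBc).symm
    _ ≤ P {ω | Tendsto (fun k => μ k ω 1) atTop (nhds 0)} := measure_mono hsub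
end
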